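/- arXiv:2505.05051 — 3 statements merged into one kernel-verified Lean document; each statement's English description precedes it below -/
import Mathlib

section
/- Let A be a weakly idempotent complete exact category with enough projectives and injectives, and let (X, X^⊥) be a complete hereditary cotorsion pair in A. Then for any object M of A and any integer n ≥ 0 the following are equivalent: (1) the X-projective dimension of M is at most n; (2) there is an acyclic sequence X_n ↣ X_{n−1} → ⋯ → X_1 → X_0 ↠ M with each X_i in X; (3) for any acyclic sequence K ↣ X_{n−1} → ⋯ → X_1 → X_0 ↠ M with each X_i in X, the object K lies in X; (4) Ext^{n+i}_A(M, Y) = 0 for all Y ∈ X^⊥ and all i ≥ 1. -/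
open CategoryTheory CategoryTheory.Limits

universe w v u v₁ u₁ v₂ u₂ v₃ u₃

namespace CotorsionPaper

variable {A : Type u} [Category.{v} A] [Preadditive A]

/-- The data of an exact structure on an additive category: a distinguished class of
kernel-cokernel pairs, called conflations. -/
structure ExactStruct (A : Type u) [Category.{v} A] [Preadditive A] where
  /-- `IsConflation f g` means that `X ↣ Y ↠ Z` (via `f`, `g`) is a conflation. -/
  IsConflation : ∀ ⦃X Y Z : A⦄, (X ⟶ Y) → (Y ⟶ Z) → Prop

namespace ExactStruct

variable (E : ExactStruct A)

/-- A morphism is an inflation if it is the first map of some conflation. -/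
def Inflation {X Y : A} (f : X ⟶ Y) : Prop :=
  ∃ (Z : A) (g : Y ⟶ Z), E.IsConflation f g

/-- A morphism is a deflation if it is the second map of some conflation. -/
def Deflation {Y Z : A} (g : Y ⟶ Z) : Prop :=
  ∃ (X : A) (f : X ⟶ Y), E.IsConflation f g

/-- Quillen's axioms for an exact category (in Bühler's formulation). -/
structure IsExactCategory : Prop where
  comp_zero : ∀ ⦃X Y Z : A⦄ ⦃f : X ⟶ Y⦄ ⦃g : Y ⟶ Z⦄, E.IsConflation f g → f ≫ g = 0
  isKernel : ∀ ⦃X Y Z : A⦄ ⦃f : X ⟶ Y⦄ ⦃g : Y ⟶ Z⦄ (h : E.IsConflation f g),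
    Nonempty (IsLimit (KernelFork.ofι f (comp_zero h)))
  isCokernel : ∀ ⦃X Y Z : A⦄ ⦃f : X ⟶ Y⦄ ⦃g : Y ⟶ Z⦄ (h : E.IsConflation f g),
    Nonempty (IsColimit (CokernelCofork.ofπ g (comp_zero h)))
  conflation_of_iso : ∀ ⦃X Y Z X' Y' Z' : A⦄ ⦃f : X ⟶ Y⦄ ⦃g : Y ⟶ Z⦄
    (eX : X ≅ X') (eY : Y ≅ Y') (eZ : Z ≅ Z') ⦃f' : X' ⟶ Y'⦄ ⦃g' : Y' ⟶ Z'⦄,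
    E.IsConflation f g → eX.hom ≫ f' = f ≫ eY.hom → eY.hom ≫ g' = g ≫ eZ.hom →
    E.IsConflation f' g'
  id_inflation : ∀ X : A, E.Inflation (𝟙 X)
  id_deflation : ∀ X : A, E.Deflation (𝟙 X)
  inflation_comp : ∀ ⦃X Y Z : A⦄ ⦃f : X ⟶ Y⦄ ⦃g : Y ⟶ Z⦄,
    E.Inflation f → E.Inflation g → E.Inflation (f ≫ g)
  deflation_comp : ∀ ⦃X Y Z : A⦄ ⦃f : X ⟶ Y⦄ ⦃g : Y ⟶ Z⦄,
    E.Deflation f → E.Deflation g → E.Deflation (f ≫ g)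
  inflation_pushout : ∀ ⦃X Y X' : A⦄ ⦃f : X ⟶ Y⦄ (u : X ⟶ X'), E.Inflation f →
    ∃ (Y' : A) (f' : X' ⟶ Y') (v : Y ⟶ Y'), E.Inflation f' ∧ IsPushout f u v f'
  deflation_pullback : ∀ ⦃Y Z Z' : A⦄ ⦃g : Y ⟶ Z⦄ (u : Z' ⟶ Z), E.Deflation g →
    ∃ (Y' : A) (g' : Y' ⟶ Z') (v : Y' ⟶ Y), E.Deflation g' ∧ IsPullback g' v u g

end ExactStruct

/-- An additive category is weakly idempotent complete if every split monomorphism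
has a cokernel. -/
def WIC (A : Type u) [Category.{v} A] [Preadditive A] : Prop :=
  ∀ ⦃X Y : A⦄ (f : X ⟶ Y), (∃ r : Y ⟶ X, f ≫ r = 𝟙 X) → HasCokernel f

namespace ExactStruct

variable (E : ExactStruct A)

/-- An object is projective (relative to the exact structure) if maps out of it lift
along deflations. -/
def ProjObj (P : A) : Prop :=
  ∀ ⦃Y Z : A⦄ ⦃g : Y ⟶ Z⦄, E.Deflation g → ∀ h : P ⟶ Z, ∃ l : P ⟶ Y, l ≫ g = h

/-- An object is injective (relative to the exact structure) if maps into it extend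
along inflations. -/
def InjObj (I : A) : Prop :=
  ∀ ⦃X Y : A⦄ ⦃f : X ⟶ Y⦄, E.Inflation f → ∀ h : X ⟶ I, ∃ l : Y ⟶ I, f ≫ l = h

/-- The exact category has enough projectives: every object admits a deflation from
a projective object. -/
def EnoughProjectives : Prop :=
  ∀ M : A, ∃ (K P : A) (f : K ⟶ P) (g : P ⟶ M), E.ProjObj P ∧ E.IsConflation f g

/-- The exact category has enough injectives. -/
def EnoughInjectives : Prop :=
  ∀ M : A, ∃ (I C : A) (f : M ⟶ I) (g : I ⟶ C), E.InjObj I ∧ E.IsConflation f g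

/-- `Ext¹(M, Y) = 0`: every conflation `Y ↣ Eo ↠ M` splits. -/
def Ext1Zero (M Y : A) : Prop :=
  ∀ ⦃Eo : A⦄ ⦃f : Y ⟶ Eo⦄ ⦃g : Eo ⟶ M⦄, E.IsConflation f g → ∃ s : M ⟶ Eo, s ≫ g = 𝟙 M

end ExactStruct

/-- `ExtZero E n M Y` means `Extⁿ(M, Y) = 0` (defined by dimension shifting along
projective presentations; the value at `n = 0` is irrelevant and set to `True`). -/
def ExtZero (E : ExactStruct A) : ℕ → A → A → Prop
  | 0, _, _ => True
  | 1, M, Y => E.Ext1Zero M Y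
  | (n + 2), M, Y => ∀ ⦃K P : A⦄ ⦃f : K ⟶ P⦄ ⦃g : P ⟶ M⦄,
      E.ProjObj P → E.IsConflation f g → ExtZero E (n + 1) K Y

namespace ExactStruct

variable (E : ExactStruct A)

/-- The right Ext-orthogonal of a class of objects. -/
def rightPerp (X : Set A) : Set A := {M | ∀ C ∈ X, E.Ext1Zero C M}

/-- The left Ext-orthogonal of a class of objects. -/
def leftPerp (Y : Set A) : Set A := {M | ∀ L ∈ Y, E.Ext1Zero M L}

end ExactStruct

/-- `SyzOf E X n K M` : `K` is an `n`-th syzygy of `M`, i.e. there is an acyclic sequence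
`K ↣ X_{n-1} → ⋯ → X_0 ↠ M` with all middle terms in `X`. -/
def SyzOf (E : ExactStruct A) (X : Set A) : ℕ → A → A → Prop
  | 0, K, M => Nonempty (K ≅ M)
  | (n + 1), K, M => ∃ (K' X0 : A) (f : K' ⟶ X0) (g : X0 ⟶ M),
      X0 ∈ X ∧ E.IsConflation f g ∧ SyzOf E X n K K'

/-- `CosyzOf E Y n C M` : `C` is an `n`-th cosyzygy of `M` with respect to `Y`. -/
def CosyzOf (E : ExactStruct A) (Y : Set A) : ℕ → A → A → Prop
  | 0, C, M => Nonempty (M ≅ C)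
  | (n + 1), C, M => ∃ (C' Y0 : A) (f : M ⟶ Y0) (g : Y0 ⟶ C'),
      Y0 ∈ Y ∧ E.IsConflation f g ∧ CosyzOf E Y n C C'

namespace ExactStruct

variable (E : ExactStruct A)

/-- There is an acyclic sequence `X_n ↣ X_{n-1} → ⋯ → X_0 ↠ M` with all `X_i ∈ X`. -/
def pdLE (X : Set A) (n : ℕ) (M : A) : Prop := ∃ K, K ∈ X ∧ SyzOf E X n K M

/-- The `X`-projective dimension of `M`, valued in `ℕ∞`. -/
noncomputable def pdim (X : Set A) (M : A) : ℕ∞ :=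
  sInf ((fun m : ℕ => (m : ℕ∞)) '' {m : ℕ | E.pdLE X m M})

/-- `X_n`: the class of objects of `X`-projective dimension at most `n`. -/
def pdSet (X : Set A) (n : ℕ) : Set A := {M | E.pdim X M ≤ (n : ℕ∞)}

/-- There is an acyclic sequence `M ↣ Y^0 → ⋯ → Y^{n-1} ↠ Y^n` with all `Y^i ∈ Y`. -/
def idLE (Y : Set A) (n : ℕ) (M : A) : Prop := ∃ C, C ∈ Y ∧ CosyzOf E Y n C M

/-- The `Y`-injective dimension of `M`, valued in `ℕ∞`. -/
noncomputable def idim (Y : Set A) (M : A) : ℕ∞ :=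
  sInf ((fun m : ℕ => (m : ℕ∞)) '' {m : ℕ | E.idLE Y m M})

/-- `Y_n`: the class of objects of `Y`-injective dimension at most `n`. -/
def idSet (Y : Set A) (n : ℕ) : Set A := {M | E.idim Y M ≤ (n : ℕ∞)}

/-- `(X, Y)` is a cotorsion pair. -/
def IsCotorsionPair (X Y : Set A) : Prop :=
  E.rightPerp X = Y ∧ E.leftPerp Y = X

/-- `(X, Y)` is a complete cotorsion pair. -/
def IsCompleteCP (X Y : Set A) : Prop :=
  E.IsCotorsionPair X Y ∧
  (∀ M : A, ∃ (Y' X' : A) (f : Y' ⟶ X') (g : X' ⟶ M),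
    Y' ∈ Y ∧ X' ∈ X ∧ E.IsConflation f g) ∧
  (∀ M : A, ∃ (Y'' X'' : A) (f : M ⟶ Y'') (g : Y'' ⟶ X''),
    Y'' ∈ Y ∧ X'' ∈ X ∧ E.IsConflation f g)

/-- Heredity conditions: `X` is closed under kernels of deflations and `Y` is closed
under cokernels of inflations. -/
def HereditaryClasses (X Y : Set A) : Prop :=
  (∀ ⦃K B C : A⦄ ⦃f : K ⟶ B⦄ ⦃g : B ⟶ C⦄,
    E.IsConflation f g → B ∈ X → C ∈ X → K ∈ X) ∧
  (∀ ⦃K B C : A⦄ ⦃f : K ⟶ B⦄ ⦃g : B ⟶ C⦄,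
    E.IsConflation f g → K ∈ Y → B ∈ Y → C ∈ Y)

/-- `W` is a thick class: closed under direct summands and two-out-of-three
in conflations. -/
def IsThick (W : Set A) : Prop :=
  (∀ ⦃M N : A⦄ (s : M ⟶ N) (r : N ⟶ M), s ≫ r = 𝟙 M → N ∈ W → M ∈ W) ∧
  (∀ ⦃X Y Z : A⦄ ⦃f : X ⟶ Y⦄ ⦃g : Y ⟶ Z⦄, E.IsConflation f g →
    ((X ∈ W → Y ∈ W → Z ∈ W) ∧ (X ∈ W → Z ∈ W → Y ∈ W) ∧ (Y ∈ W → Z ∈ W → X ∈ W)))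

/-- `(C, W, F)` is a Hovey triple. -/
def IsHoveyTriple (C W F : Set A) : Prop :=
  E.IsCompleteCP (C ∩ W) F ∧ E.IsCompleteCP C (W ∩ F) ∧ E.IsThick W

/-- `(C, W, F)` is a hereditary Hovey triple. -/
def IsHereditaryHoveyTriple (C W F : Set A) : Prop :=
  E.IsHoveyTriple C W F ∧ E.HereditaryClasses (C ∩ W) F ∧ E.HereditaryClasses C (W ∩ F)

/-- A complete cotorsion pair `(X, Y)` is left extendable if `(X_n, X_n^⊥)` is a
complete cotorsion pair for every `n ≥ 0`. -/
def LeftExtendable (X Y : Set A) : Prop :=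
  E.IsCompleteCP X Y ∧
  ∀ n : ℕ, E.IsCompleteCP (E.pdSet X n) (E.rightPerp (E.pdSet X n))

/-- A complete cotorsion pair `(X, Y)` is right extendable if `(⊥(Y_n), Y_n)` is a
complete cotorsion pair for every `n ≥ 0`. -/
def RightExtendable (X Y : Set A) : Prop :=
  E.IsCompleteCP X Y ∧
  ∀ n : ℕ, E.IsCompleteCP (E.leftPerp (E.idSet Y n)) (E.idSet Y n)

/-- The class `Y` is the right Ext-orthogonal of a set (i.e. small family) of objects. -/
def SetGenerated (Y : Set A) : Prop :=
  ∃ (ι : Type v) (G : ι → A), Y = {M | ∀ i, E.Ext1Zero (G i) M}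

/-- Trivial cofibrations of the exact model structure associated to a Hovey triple:
inflations with cokernel in `C ∩ W`. -/
def TrivCof (C W : Set A) : MorphismProperty A := fun X Y f =>
  ∃ (Z : A) (g : Y ⟶ Z), E.IsConflation f g ∧ Z ∈ C ∩ W

/-- Trivial fibrations: deflations with kernel in `W ∩ F`. -/
def TrivFib (W F : Set A) : MorphismProperty A := fun Y Z g =>
  ∃ (K : A) (f : K ⟶ Y), E.IsConflation f g ∧ K ∈ W ∩ F

/-- Weak equivalences of the exact model structure associated to a Hovey triple. -/
def WeakEquiv (C W F : Set A) : MorphismProperty A := fun X Y f =>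
  ∃ (Z : A) (i : X ⟶ Z) (p : Z ⟶ Y), E.TrivCof C W i ∧ E.TrivFib W F p ∧ i ≫ p = f

/-- The homotopy category of the exact model structure associated to the Hovey triple
`(C, W, F)`: the localization of `A` at the weak equivalences. -/
abbrev Ho (C W F : Set A) := (E.WeakEquiv C W F).Localization

end ExactStruct

/-- The full subcategory on a class of objects. -/
abbrev SubCat (S : Set A) := ObjectProperty.FullSubcategory (fun X : A => X ∈ S)

/-- The stable relation: two maps are identified if their difference factors through
an object of `P`. -/
def stableRel (S P : Set A) : HomRel (SubCat S) := fun X Y f g =>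
  ∃ (Q : A) (u : X.obj ⟶ Q) (v : Q ⟶ Y.obj),
    Q ∈ P ∧ (f.hom : X.obj ⟶ Y.obj) - (g.hom : X.obj ⟶ Y.obj) = u ≫ v

/-- The stable category of the full subcategory on `S`, modulo maps factoring through
objects of `P`. -/
abbrev StableCat (S P : Set A) := CategoryTheory.Quotient (stableRel S P)

namespace ExactStruct

variable (E : ExactStruct A)

/-- `P0` is a projective object of the full exact subcategory on `S`. -/
def SubProjObj (S : Set A) (P0 : A) : Prop :=
  P0 ∈ S ∧ ∀ ⦃X Y Z : A⦄ ⦃f : X ⟶ Y⦄ ⦃g : Y ⟶ Z⦄,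
    E.IsConflation f g → X ∈ S → Y ∈ S → Z ∈ S →
    ∀ h : P0 ⟶ Z, ∃ l : P0 ⟶ Y, l ≫ g = h

/-- `I0` is an injective object of the full exact subcategory on `S`. -/
def SubInjObj (S : Set A) (I0 : A) : Prop :=
  I0 ∈ S ∧ ∀ ⦃X Y Z : A⦄ ⦃f : X ⟶ Y⦄ ⦃g : Y ⟶ Z⦄,
    E.IsConflation f g → X ∈ S → Y ∈ S → Z ∈ S →
    ∀ h : X ⟶ I0, ∃ l : Y ⟶ I0, f ≫ l = h

/-- The full exact subcategory on `S` is a Frobenius category whose class of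
projective-injective objects is `P`. -/
def IsFrobeniusSub (S P : Set A) : Prop :=
  (∀ Q0 : A, E.SubProjObj S Q0 ↔ Q0 ∈ S ∩ P) ∧
  (∀ Q0 : A, E.SubInjObj S Q0 ↔ Q0 ∈ S ∩ P) ∧
  (∀ M ∈ S, ∃ (K Q0 : A) (f : K ⟶ Q0) (g : Q0 ⟶ M),
    K ∈ S ∧ Q0 ∈ P ∧ E.IsConflation f g) ∧
  (∀ M ∈ S, ∃ (Q0 C0 : A) (f : M ⟶ Q0) (g : Q0 ⟶ C0),
    C0 ∈ S ∧ Q0 ∈ P ∧ E.IsConflation f g)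

end ExactStruct

/-- The canonical exact structure of an abelian category: conflations are the short
exact sequences. -/
def abelianES (A : Type u) [Category.{v} A] [Abelian A] : ExactStruct A where
  IsConflation X Y Z f g :=
    ∃ w : f ≫ g = 0, Mono f ∧ Epi g ∧ (ShortComplex.mk f g w).Exact

/-- A recollement (at the level of plain categories) of `T₂` relative to `T₁` and `T₃`. -/
structure Recollement (T₁ : Type u₁) (T₂ : Type u₂) (T₃ : Type u₃)
    [Category.{v₁} T₁] [Category.{v₂} T₂] [Category.{v₃} T₃] where
  i : T₁ ⥤ T₂
  iStar : T₂ ⥤ T₁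
  iShriek : T₂ ⥤ T₁
  j : T₂ ⥤ T₃
  jShriek : T₃ ⥤ T₂
  jStar : T₃ ⥤ T₂
  adj₁ : iStar ⊣ i
  adj₂ : i ⊣ iShriek
  adj₃ : jShriek ⊣ j
  adj₄ : j ⊣ jStar
  i_ff : i.FullyFaithful
  jShriek_ff : jShriek.FullyFaithful
  jStar_ff : jStar.FullyFaithful
  ker : ∀ X : T₂, Limits.IsZero (j.obj X) ↔ ∃ Y : T₁, Nonempty (X ≅ i.obj Y)

section Presentable

/-- A preorder is `λ`-directed if every subset of cardinality `< λ` has an upper bound. -/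
def IsLamDirected (lam : Cardinal.{v}) (J : Type v) [Preorder J] : Prop :=
  ∀ s : Set J, Cardinal.mk s < lam → ∃ u : J, ∀ j ∈ s, j ≤ u

/-- An object `X` is `λ`-presentable if `Hom(X, −)` preserves `λ`-directed colimits. -/
def IsPresentableObj (lam : Cardinal.{v}) (X : A) : Prop :=
  ∀ (J : Type v) [Preorder J], IsLamDirected lam J →
    ∀ (D : J ⥤ A) (c : Cocone D), IsColimit c →
      (∀ f : X ⟶ c.pt, ∃ (j : J) (g : X ⟶ D.obj j), g ≫ c.ι.app j = f) ∧
      (∀ (j j' : J) (g : X ⟶ D.obj j) (g' : X ⟶ D.obj j'),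
        g ≫ c.ι.app j = g' ≫ c.ι.app j' →
        ∃ (l : J) (hj : j ≤ l) (hj' : j' ≤ l),
          g ≫ D.map (homOfLE hj) = g' ≫ D.map (homOfLE hj'))

/-- `X` is a `λ`-directed colimit of objects isomorphic to members of the family `G`. -/
def IsLamDirColimitOf (lam : Cardinal.{v}) {ι : Type v} (G : ι → A) (X : A)
    (J : Type v) [Preorder J] : Prop :=
  IsLamDirected lam J ∧
  ∃ (D : J ⥤ A) (c : Cocone D), Nonempty (IsColimit c) ∧ Nonempty (c.pt ≅ X) ∧
    ∀ j : J, ∃ i : ι, Nonempty (D.obj j ≅ G i)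

/-- The category `A` is `λ`-accessible. -/
def IsAccessibleCat (A : Type u) [Category.{v} A] (lam : Cardinal.{v}) : Prop :=
  Cardinal.IsRegular lam ∧
  ∃ (ι : Type v) (G : ι → A),
    (∀ i, IsPresentableObj lam (G i)) ∧
    ∀ X : A, ∃ (J : Type v) (instJ : Preorder J),
      @IsLamDirColimitOf A _ lam ι G X J instJ

/-- The category `A` is locally presentable: cocomplete and accessible. -/
def IsLocallyPresentableCat (A : Type u) [Category.{v} A] : Prop :=
  HasColimitsOfSize.{v, v} A ∧ ∃ lam : Cardinal.{v}, IsAccessibleCat A lam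

end Presentable

end CotorsionPaper

namespace CotorsionPaper

section Aux

variable {A : Type u} [Category.{v} A] [Preadditive A]

namespace ExactStruct

variable {E : ExactStruct A}

theorem conf_mono (hE : E.IsExactCategory) {X Y Z : A} {f : X ⟶ Y} {g : Y ⟶ Z}
    (h : E.IsConflation f g) : Mono f := by
  obtain ⟨hl⟩ := hE.isKernel h
  constructor
  intro T u v huv
  exact Fork.IsLimit.hom_ext hl (by simpa using huv)

theorem conf_epi (hE : E.IsExactCategory) {X Y Z : A} {f : X ⟶ Y} {g : Y ⟶ Z}
    (h : E.IsConflation f g) : Epi g := by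
  obtain ⟨hl⟩ := hE.isCokernel h
  constructor
  intro T u v huv
  exact Cofork.IsColimit.hom_ext hl (by simpa using huv)

/-- Factorization through the kernel part of a conflation. -/
theorem conf_lift (hE : E.IsExactCategory) {X Y Z : A} {f : X ⟶ Y} {g : Y ⟶ Z}
    (h : E.IsConflation f g) {T : A} (t : T ⟶ Y) (ht : t ≫ g = 0) :
    ∃ u : T ⟶ X, u ≫ f = t := by
  obtain ⟨hl⟩ := hE.isKernel h
  obtain ⟨u, hu⟩ := KernelFork.IsLimit.lift' hl t ht
  exact ⟨u, by simpa using hu⟩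

/-- Factorization through the cokernel part of a conflation. -/
theorem conf_desc (hE : E.IsExactCategory) {X Y Z : A} {f : X ⟶ Y} {g : Y ⟶ Z}
    (h : E.IsConflation f g) {T : A} (t : Y ⟶ T) (ht : f ≫ t = 0) :
    ∃ u : Z ⟶ T, g ≫ u = t := by
  obtain ⟨hl⟩ := hE.isCokernel h
  obtain ⟨u, hu⟩ := CokernelCofork.IsColimit.desc' hl t ht
  exact ⟨u, by simpa using hu⟩

theorem conf_src (hE : E.IsExactCategory) {X Y Z X' : A} {f : X ⟶ Y} {g : Y ⟶ Z}
    (e : X' ≅ X) (h : E.IsConflation f g) : E.IsConflation (e.hom ≫ f) g :=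
  hE.conflation_of_iso e.symm (Iso.refl Y) (Iso.refl Z) h (by simp) (by simp)

theorem conf_mid (hE : E.IsExactCategory) {X Y Z Y' : A} {f : X ⟶ Y} {g : Y ⟶ Z}
    (e : Y ≅ Y') (h : E.IsConflation f g) : E.IsConflation (f ≫ e.hom) (e.inv ≫ g) :=
  hE.conflation_of_iso (Iso.refl X) e (Iso.refl Z) h (by simp) (by simp)

theorem conf_tgt (hE : E.IsExactCategory) {X Y Z Z' : A} {f : X ⟶ Y} {g : Y ⟶ Z}
    (e : Z ≅ Z') (h : E.IsConflation f g) : E.IsConflation f (g ≫ e.hom) :=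
  hE.conflation_of_iso (Iso.refl X) (Iso.refl Y) e h (by simp) (by simp)

theorem defl_iso_comp (hE : E.IsExactCategory) {Y Z W' : A} {g : Y ⟶ Z}
    (e : W' ≅ Y) (h : E.Deflation g) : E.Deflation (e.hom ≫ g) := by
  obtain ⟨K, f, hc⟩ := h
  exact ⟨K, f ≫ e.inv, by simpa using conf_mid hE e.symm hc⟩

/-- A conflation is determined by its deflation, up to unique iso of kernels:
if `k` is also a kernel-like map for `g` then `(k, g)` is a conflation. -/
theorem conf_of_isKernel (hE : E.IsExactCategory) {X Y Z X' : A} {f : X ⟶ Y} {g : Y ⟶ Z}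
    (h : E.IsConflation f g) {k : X' ⟶ Y} (hk0 : k ≫ g = 0) (hkm : Mono k)
    (hfac : ∀ ⦃T : A⦄ (t : T ⟶ Y), t ≫ g = 0 → ∃ u : T ⟶ X', u ≫ k = t) :
    E.IsConflation k g := by
  have hfm : Mono f := conf_mono hE h
  obtain ⟨u, hu⟩ := hfac f (hE.comp_zero h)
  obtain ⟨u', hu'⟩ := conf_lift hE h k hk0
  have huu' : u ≫ u' = 𝟙 X := by
    have : (u ≫ u') ≫ f = 𝟙 X ≫ f := by rw [Category.assoc, hu', hu, Category.id_comp]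
    exact hfm.right_cancellation _ _ this
  have hu'u : u' ≫ u = 𝟙 X' := by
    have : (u' ≫ u) ≫ k = 𝟙 X' ≫ k := by rw [Category.assoc, hu, hu', Category.id_comp]
    exact hkm.right_cancellation _ _ this
  have h2 := conf_src hE (Iso.symm ⟨u, u', huu', hu'u⟩) h
  rwa [show (Iso.symm ⟨u, u', huu', hu'u⟩).hom = u' from rfl, hu'] at h2

/-- Dual of `conf_of_isKernel`. -/
theorem conf_of_isCokernel (hE : E.IsExactCategory) {X Y Z Z' : A} {f : X ⟶ Y} {g : Y ⟶ Z}
    (h : E.IsConflation f g) {q : Y ⟶ Z'} (hq0 : f ≫ q = 0) (hqe : Epi q)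
    (hfac : ∀ ⦃T : A⦄ (t : Y ⟶ T), f ≫ t = 0 → ∃ u : Z' ⟶ T, q ≫ u = t) :
    E.IsConflation f q := by
  have hge : Epi g := conf_epi hE h
  obtain ⟨u, hu⟩ := hfac g (hE.comp_zero h)
  obtain ⟨u', hu'⟩ := conf_desc hE h q hq0
  have huu' : u ≫ u' = 𝟙 Z' := by
    have : q ≫ u ≫ u' = q ≫ 𝟙 Z' := by
      rw [← Category.assoc, hu, hu', Category.comp_id]
    exact hqe.left_cancellation _ _ this
  have hu'u : u' ≫ u = 𝟙 Z := by
    have : g ≫ u' ≫ u = g ≫ 𝟙 Z := by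
      rw [← Category.assoc, hu', hu, Category.comp_id]
    exact hge.left_cancellation _ _ this
  have h2 := conf_tgt hE (⟨u', u, hu'u, huu'⟩ : Z ≅ Z') h
  rwa [show (⟨u', u, hu'u, huu'⟩ : Z ≅ Z').hom = u' from rfl, hu'] at h2


/-- The kernel of a pulled-back deflation is the kernel of the original deflation. -/
theorem pullback_conf (hE : E.IsExactCategory) {K B M P D : A} {f : K ⟶ B} {g : B ⟶ M}
    (h : E.IsConflation f g) {u : P ⟶ M} {d₁ : D ⟶ P} {d₂ : D ⟶ B}
    (hpb : IsPullback d₁ d₂ u g) (hd : E.Deflation d₁) :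
    ∃ k : K ⟶ D, k ≫ d₂ = f ∧ E.IsConflation k d₁ := by
  obtain ⟨K₀, f₀, hc₀⟩ := hd
  have hfg : f ≫ g = 0 := hE.comp_zero h
  have hw : (0 : K ⟶ P) ≫ u = f ≫ g := by simp [hfg]
  refine ⟨hpb.lift 0 f hw, hpb.lift_snd _ _ _, ?_⟩
  have hk1 : hpb.lift 0 f hw ≫ d₁ = 0 := hpb.lift_fst _ _ _
  have hk2 : hpb.lift 0 f hw ≫ d₂ = f := hpb.lift_snd _ _ _
  have hfm : Mono f := conf_mono hE h
  refine conf_of_isKernel hE hc₀ hk1 ?_ ?_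
  · constructor; intro T a b hab
    apply hfm.right_cancellation
    rw [← hk2, ← Category.assoc, ← Category.assoc, hab]
  · intro T t ht
    have h2 : (t ≫ d₂) ≫ g = 0 := by
      rw [Category.assoc, ← hpb.w, ← Category.assoc, ht, zero_comp]
    obtain ⟨w', hw'⟩ := conf_lift hE h (t ≫ d₂) h2
    refine ⟨w', hpb.hom_ext ?_ ?_⟩
    · rw [Category.assoc, hk1, comp_zero, ht]
    · rw [Category.assoc, hk2, hw']

/-- Given a section of the deflation, the inflation admits a retraction. -/
theorem retr_of_sect (hE : E.IsExactCategory) {X Y Z : A} {f : X ⟶ Y} {g : Y ⟶ Z}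
    (h : E.IsConflation f g) {s : Z ⟶ Y} (hs : s ≫ g = 𝟙 Z) :
    ∃ r : Y ⟶ X, f ≫ r = 𝟙 X ∧ r ≫ f = 𝟙 Y - g ≫ s := by
  have h0 : (𝟙 Y - g ≫ s) ≫ g = 0 := by
    simp only [Preadditive.sub_comp, Category.id_comp, Category.assoc, hs,
      Category.comp_id, sub_self]
  obtain ⟨r, hr⟩ := conf_lift hE h _ h0
  have hfm : Mono f := conf_mono hE h
  refine ⟨r, hfm.right_cancellation _ _ ?_, hr⟩
  rw [Category.assoc, hr, Category.id_comp, Preadditive.comp_sub, Category.comp_id]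
  rw [← Category.assoc, hE.comp_zero h, zero_comp, sub_zero]

/-- Given a retraction of the inflation, the deflation admits a section. -/
theorem sect_of_retr (hE : E.IsExactCategory) {X Y Z : A} {f : X ⟶ Y} {g : Y ⟶ Z}
    (h : E.IsConflation f g) {r : Y ⟶ X} (hr : f ≫ r = 𝟙 X) :
    ∃ s : Z ⟶ Y, s ≫ g = 𝟙 Z ∧ g ≫ s = 𝟙 Y - r ≫ f := by
  have h0 : f ≫ (𝟙 Y - r ≫ f) = 0 := by
    simp only [Preadditive.comp_sub, Category.comp_id, ← Category.assoc, hr,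
      Category.id_comp, sub_self]
  obtain ⟨s, hsd⟩ := conf_desc hE h _ h0
  have hge : Epi g := conf_epi hE h
  refine ⟨s, hge.left_cancellation _ _ ?_, hsd⟩
  rw [← Category.assoc, hsd, Category.comp_id, Preadditive.sub_comp, Category.id_comp]
  rw [Category.assoc, hE.comp_zero h, comp_zero, sub_zero]

/-- Pulling back two conflations over the same base against each other. -/
theorem pullback_both (hE : E.IsExactCategory) {K B M L P : A} {f : K ⟶ B} {g : B ⟶ M}
    {f' : L ⟶ P} {g' : P ⟶ M} (h : E.IsConflation f g) (h' : E.IsConflation f' g') :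
    ∃ (D : A) (d₁ : D ⟶ P) (d₂ : D ⟶ B) (k : K ⟶ D) (l : L ⟶ D),
      E.IsConflation k d₁ ∧ E.IsConflation l d₂ ∧ k ≫ d₂ = f ∧ l ≫ d₁ = f' := by
  obtain ⟨D, d₁, d₂, hdefl₁, hpb⟩ := hE.deflation_pullback g' ⟨K, f, h⟩
  obtain ⟨D', e₁, e₂, hdefl₂, hpb'⟩ := hE.deflation_pullback g ⟨L, f', h'⟩
  have hpbf : IsPullback d₂ d₁ g g' := hpb.flip
  have hd₂ : E.Deflation d₂ := by
    have := defl_iso_comp hE (hpbf.isoIsPullback _ _ hpb') hdefl₂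
    rwa [IsPullback.isoIsPullback_hom_fst] at this
  obtain ⟨k, hk, hck⟩ := pullback_conf hE h hpb hdefl₁
  obtain ⟨l, hl, hcl⟩ := pullback_conf hE h' hpbf hd₂
  exact ⟨D, d₁, d₂, k, l, hck, hcl, hk, hl⟩

/-- Noether-type lemma: given conflations `Y ↣ W ↠ D` and `A' ↣ D ↠ C`, the kernel `V` of the
composite deflation `W ↠ C` fits into conflations `V ↣ W ↠ C` and `Y ↣ V ↠ A'`. -/
theorem noether (hE : E.IsExactCategory) {Y W D A' C : A} {a : Y ⟶ W} {b : W ⟶ D}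
    {i : A' ⟶ D} {p : D ⟶ C} (h₁ : E.IsConflation a b) (h₂ : E.IsConflation i p) :
    ∃ (V : A) (w : V ⟶ W) (a₁ : Y ⟶ V) (p₁ : V ⟶ A'),
      E.IsConflation w (b ≫ p) ∧ E.IsConflation a₁ p₁ ∧ a₁ ≫ w = a ∧ p₁ ≫ i = w ≫ b := by
  have hmi : Mono i := conf_mono hE h₂
  have hdbp : E.Deflation (b ≫ p) := hE.deflation_comp ⟨Y, a, h₁⟩ ⟨A', i, h₂⟩
  obtain ⟨V, w, hcV⟩ := hdbp
  have hmw : Mono w := conf_mono hE hcV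
  obtain ⟨p₁, hp₁⟩ := conf_lift hE h₂ (w ≫ b) (by rw [Category.assoc, ← hE.comp_zero hcV])
  obtain ⟨a₁, ha₁⟩ := conf_lift hE hcV a
    (by rw [← Category.assoc, hE.comp_zero h₁, zero_comp])
  have comm : p₁ ≫ i = w ≫ b := hp₁
  -- the square (p₁, w, i, b) is a pullback
  have hsnd : ∀ s : PullbackCone i b, s.snd ≫ (b ≫ p) = 0 := by
    intro s
    rw [← Category.assoc, ← s.condition, Category.assoc, hE.comp_zero h₂, comp_zero]
  have hfacV : ∀ s : PullbackCone i b, {u : s.pt ⟶ V // u ≫ w = s.snd} := by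
    intro s
    exact ⟨(conf_lift hE hcV s.snd (hsnd s)).choose,
      (conf_lift hE hcV s.snd (hsnd s)).choose_spec⟩
  have hpbV : IsPullback p₁ w i b := by
    refine IsPullback.of_isLimit (PullbackCone.IsLimit.mk comm
      (fun s => (hfacV s).1) (fun s => ?_) (fun s => (hfacV s).2)
      (fun s m h1 h2 => ?_))
    · apply hmi.right_cancellation
      rw [Category.assoc, comm, ← Category.assoc, (hfacV s).2, s.condition]
    · apply hmw.right_cancellation
      rw [h2, (hfacV s).2]
  -- p₁ is a deflation
  obtain ⟨D₀, g₀, v₀, hdefl₀, hpb₀⟩ := hE.deflation_pullback i ⟨Y, a, h₁⟩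
  have hdp₁ : E.Deflation p₁ := by
    have := defl_iso_comp hE (hpbV.isoIsPullback _ _ hpb₀) hdefl₀
    rwa [IsPullback.isoIsPullback_hom_fst] at this
  obtain ⟨K₁, f₁, hcK₁⟩ := hdp₁
  have hma₁ : Mono a₁ := by
    have hma : Mono a := conf_mono hE h₁
    constructor; intro T u v huv
    apply hma.right_cancellation
    rw [← ha₁, ← Category.assoc, ← Category.assoc, huv]
  have ha₁p₁ : a₁ ≫ p₁ = 0 := by
    apply hmi.right_cancellation
    rw [Category.assoc, comm, ← Category.assoc, ha₁, hE.comp_zero h₁, zero_comp]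
  have hconf : E.IsConflation a₁ p₁ := by
    refine conf_of_isKernel hE hcK₁ ha₁p₁ hma₁ ?_
    intro T t ht
    have h2 : (t ≫ w) ≫ b = 0 := by
      rw [Category.assoc, ← comm, ← Category.assoc, ht, zero_comp]
    obtain ⟨u, hu⟩ := conf_lift hE h₁ (t ≫ w) h2
    refine ⟨u, hmw.right_cancellation _ _ ?_⟩
    rw [Category.assoc, ha₁, hu]
  exact ⟨V, w, a₁, p₁, hcV, hconf, ha₁, comm⟩

/-- Projective objects satisfy `Ext¹(P, Y) = 0` for every `Y`. -/
theorem ext1_of_proj (hE : E.IsExactCategory) {P Y : A} (hP : E.ProjObj P) :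
    E.Ext1Zero P Y := by
  intro Eo f g hc
  obtain ⟨l, hl⟩ := hP ⟨Y, f, hc⟩ (𝟙 P)
  exact ⟨l, hl⟩

/-- Retracts of projective objects are projective. -/
theorem proj_retract {P₀ P : A} (i : P₀ ⟶ P) (r : P ⟶ P₀) (hir : i ≫ r = 𝟙 P₀)
    (hP : E.ProjObj P) : E.ProjObj P₀ := by
  intro Y Z g hg h
  obtain ⟨l, hl⟩ := hP hg (r ≫ h)
  exact ⟨i ≫ l, by rw [Category.assoc, hl, ← Category.assoc, hir, Category.id_comp]⟩

/-- Ext¹-vanishing passes to retracts in the first variable. -/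
theorem ext1_retract (hE : E.IsExactCategory) {K D Y : A} {i : K ⟶ D} {r : D ⟶ K}
    (hir : i ≫ r = 𝟙 K) (h : E.Ext1Zero D Y) : E.Ext1Zero K Y := by
  intro W α β hc
  obtain ⟨W', β', v, hdefl, hpb⟩ := hE.deflation_pullback r ⟨Y, α, hc⟩
  obtain ⟨α', hα'v, hcV⟩ := pullback_conf hE hc hpb hdefl
  obtain ⟨t, ht⟩ := h hcV
  refine ⟨i ≫ t ≫ v, ?_⟩
  rw [Category.assoc, Category.assoc, ← hpb.w, ← Category.assoc t, ht,
    Category.id_comp, hir]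

/-- Ext¹-vanishing in the first variable is invariant under isomorphism. -/
theorem ext1_iso (hE : E.IsExactCategory) {K K' Y : A} (e : K ≅ K')
    (h : E.Ext1Zero K Y) : E.Ext1Zero K' Y :=
  ext1_retract hE (show e.inv ≫ e.hom = 𝟙 K' by simp) h

/-- Extension closure of the class of objects `Z` with `Ext¹(Z, Y) = 0`. -/
theorem ext1_extension (hE : E.IsExactCategory) {A₀ D C Y : A} {i : A₀ ⟶ D} {p : D ⟶ C}
    (hc : E.IsConflation i p) (hA : E.Ext1Zero A₀ Y) (hC : E.Ext1Zero C Y) :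
    E.Ext1Zero D Y := by
  intro W α β hcW
  obtain ⟨V, w, a₁, p₁, hcV, hcA, ha₁w, hp₁i⟩ := noether hE hcW hc
  obtain ⟨σ, hσ⟩ := hA hcA
  obtain ⟨ρ, hρ1, hρ2⟩ := retr_of_sect hE hcA hσ
  obtain ⟨U, w', uu, hw'infl, hpo⟩ := hE.inflation_pushout ρ ⟨_, _, hcV⟩
  -- hpo : IsPushout w ρ uu w'   (w ≫ uu = ρ ≫ w')
  have hq0 : w ≫ β ≫ p = ρ ≫ (0 : Y ⟶ C) := by
    rw [hE.comp_zero hcV, comp_zero]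
  set q : U ⟶ C := hpo.desc (β ≫ p) 0 hq0 with hqdef
  have huq : uu ≫ q = β ≫ p := hpo.inl_desc _ _ _
  have hwq : w' ≫ q = 0 := hpo.inr_desc _ _ _
  obtain ⟨U₀, q₀, hcU₀⟩ := hw'infl
  have hqe : Epi q := by
    have hbpe : Epi (β ≫ p) := conf_epi hE hcV
    constructor; intro T u v huv
    apply hbpe.left_cancellation
    rw [← huq, Category.assoc, Category.assoc, huv]
  have hcU : E.IsConflation w' q := by
    refine conf_of_isCokernel hE hcU₀ hwq hqe ?_
    intro T t ht
    have h2 : w ≫ uu ≫ t = 0 := by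
      rw [← Category.assoc, hpo.w, Category.assoc, ht, comp_zero]
    obtain ⟨t₁, ht₁⟩ := conf_desc hE hcV (uu ≫ t) h2
    refine ⟨t₁, hpo.hom_ext ?_ ?_⟩
    · rw [← Category.assoc, huq, ht₁]
    · rw [← Category.assoc, hwq, zero_comp, ht]
  obtain ⟨τ, hτ⟩ := hC hcU
  obtain ⟨ρU, hρU1, _⟩ := retr_of_sect hE hcU hτ
  have hαr : α ≫ uu ≫ ρU = 𝟙 Y := by
    rw [← ha₁w, Category.assoc, ← Category.assoc w, hpo.w, Category.assoc,
      ← Category.assoc a₁, hρ1, Category.id_comp, hρU1]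
  obtain ⟨sβ, hsβ, _⟩ := sect_of_retr hE hcW (by rw [← Category.assoc] at hαr ⊢; exact hαr)
  exact ⟨sβ, hsβ⟩

/-- If `L ↣ D ↠ B` is a conflation with `B ∈ X` and `Ext¹(D, Y) = 0` for some `Y ∈ X^⊥`,
then `Ext¹(L, Y) = 0`. -/
theorem ext1_kernel (hE : E.IsExactCategory) (hproj : E.EnoughProjectives) {X : Set A}
    (hher1 : ∀ ⦃K B C : A⦄ ⦃f : K ⟶ B⦄ ⦃g : B ⟶ C⦄,
      E.IsConflation f g → B ∈ X → C ∈ X → K ∈ X)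
    (hprojX : ∀ ⦃P : A⦄, E.ProjObj P → P ∈ X)
    {Y : A} (hY : Y ∈ E.rightPerp X)
    {L D B : A} {l : L ⟶ D} {δ : D ⟶ B} (hc : E.IsConflation l δ)
    (hB : B ∈ X) (hD : E.Ext1Zero D Y) : E.Ext1Zero L Y := by
  obtain ⟨B₁, P, b, π, hP, hcP⟩ := hproj B
  have hB₁ : E.Ext1Zero B₁ Y := hY B₁ (hher1 hcP (hprojX hP) hB)
  obtain ⟨G, d₁, d₂, lG, bG, hcl, hcb, hlG, hbG⟩ := pullback_both hE hc hcP
  obtain ⟨sP, hsP⟩ := hP ⟨_, _, hcl⟩ (𝟙 P)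
  obtain ⟨rL, hrL, _⟩ := retr_of_sect hE hcl hsP
  exact ext1_retract hE hrL (ext1_extension hE hcb hB₁ hD)

/-- The kernel of an identity conflation is a zero object. -/
theorem isZero_of_id_conf (hE : E.IsExactCategory) {Z B : A} {f : Z ⟶ B}
    (hc : E.IsConflation f (𝟙 B)) : IsZero Z := by
  have hf : f = 0 := by simpa using hE.comp_zero hc
  rw [IsZero.iff_id_eq_zero]
  obtain ⟨hl⟩ := hE.isKernel hc
  exact Fork.IsLimit.hom_ext hl (by simp [hf])

/-- Binary biproducts exist in an exact category. -/
theorem hasBinaryBiproduct_of_exact (hE : E.IsExactCategory) (A₀ B₀ : A) :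
    HasBinaryBiproduct A₀ B₀ := by
  obtain ⟨Z, f0, hc0⟩ := hE.id_deflation B₀
  have hZ : IsZero Z := isZero_of_id_conf hE hc0
  obtain ⟨P', f', v, hf', hpo⟩ := hE.inflation_pushout (hZ.to_ A₀) ⟨_, _, hc0⟩
  -- hpo : IsPushout f0 (hZ.to_ A₀) v f'
  have hcolim : IsColimit (BinaryCofan.mk f' v) := by
    refine BinaryCofan.isColimitMk
      (fun s => hpo.desc s.inr s.inl (hZ.eq_of_src _ _)) (fun s => ?_) (fun s => ?_)
      (fun s m h1 h2 => hpo.hom_ext ?_ ?_)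
    · exact hpo.inr_desc _ _ _
    · exact hpo.inl_desc _ _ _
    · exact h2.trans (hpo.inl_desc _ _ _).symm
    · exact h1.trans (hpo.inr_desc _ _ _).symm
  haveI : HasBinaryCoproduct A₀ B₀ := HasColimit.mk ⟨_, hcolim⟩
  exact HasBinaryBiproduct.of_hasBinaryCoproduct A₀ B₀

/-- Biproducts of projectives are projective. -/
theorem proj_biprod (hE : E.IsExactCategory) {P₀ P : A} (h₀ : E.ProjObj P₀)
    (h₁ : E.ProjObj P) [HasBinaryBiproduct P₀ P] : E.ProjObj (P₀ ⊞ P) := by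
  intro Y Z g hg h
  obtain ⟨l₀, hl₀⟩ := h₀ hg (biprod.inl ≫ h)
  obtain ⟨l₁, hl₁⟩ := h₁ hg (biprod.inr ≫ h)
  refine ⟨biprod.desc l₀ l₁, ?_⟩
  apply biprod.hom_ext' <;> simp [hl₀, hl₁]

/-- Given a split conflation `K ↣ D ↠ P` with `P` projective and a projective
presentation `K₁ ↣ P₀ ↠ K` of `K`, there is a projective presentation of `D`
with the same kernel `K₁`. -/
theorem biprod_pres (hE : E.IsExactCategory) {K D P K₁ P₀ : A} {k : K ⟶ D} {d : D ⟶ P}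
    (hc : E.IsConflation k d) {s : P ⟶ D} (hs : s ≫ d = 𝟙 P) (hP₀ : E.ProjObj P₀)
    (hPp : E.ProjObj P) {f₁ : K₁ ⟶ P₀} {g₁ : P₀ ⟶ K} (hpres : E.IsConflation f₁ g₁) :
    ∃ (Q : A) (f' : K₁ ⟶ Q) (g' : Q ⟶ D), E.ProjObj Q ∧ E.IsConflation f' g' := by
  haveI := hasBinaryBiproduct_of_exact hE P₀ P
  haveI := hasBinaryBiproduct_of_exact hE K P
  obtain ⟨r, hr1, hr2⟩ := retr_of_sect hE hc hs
  have hmk : Mono k := conf_mono hE hc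
  have hsr : s ≫ r = 0 := by
    apply hmk.right_cancellation
    rw [Category.assoc, hr2, zero_comp, Preadditive.comp_sub, Category.comp_id,
      ← Category.assoc, hs, Category.id_comp, sub_self]
  -- the iso `K ⊞ P ≅ D`
  have hψφ : biprod.desc k s ≫ biprod.lift r d = 𝟙 (K ⊞ P) := by
    apply biprod.hom_ext <;> apply biprod.hom_ext' <;>
      simp [hr1, hsr, hs, hE.comp_zero hc]
  have hφψ : biprod.lift r d ≫ biprod.desc k s = 𝟙 D := by
    rw [biprod.lift_desc, hr2, sub_add_cancel]
  have ψ : K ⊞ P ≅ D := ⟨biprod.desc k s, biprod.lift r d, hψφ, hφψ⟩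
  -- `biprod.map g₁ (𝟙 P)` is a deflation
  have comm : biprod.map g₁ (𝟙 P) ≫ biprod.fst = biprod.fst ≫ g₁ := by
    rw [biprod.map_fst]
  have hpbsq : IsPullback (biprod.map g₁ (𝟙 P)) biprod.fst biprod.fst g₁ := by
    refine IsPullback.of_isLimit' ⟨comm⟩ (PullbackCone.IsLimit.mk comm
      (fun t => biprod.lift t.snd (t.fst ≫ biprod.snd)) (fun t => ?_) (fun t => ?_)
      (fun t m h1 h2 => ?_))
    · apply biprod.hom_ext
      · rw [Category.assoc, biprod.map_fst, ← Category.assoc, biprod.lift_fst,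
          ← t.condition]
      · rw [Category.assoc, biprod.map_snd, Category.comp_id, biprod.lift_snd]
    · rw [biprod.lift_fst]
    · apply biprod.hom_ext
      · rw [biprod.lift_fst, h2]
      · rw [biprod.lift_snd, ← h1, Category.assoc, biprod.map_snd, Category.comp_id]
  have hdefl : E.Deflation (biprod.map g₁ (𝟙 P)) := by
    obtain ⟨E₀, g'', v'', hd'', hpb''⟩ := hE.deflation_pullback
      (biprod.fst : K ⊞ P ⟶ K) ⟨K₁, f₁, hpres⟩
    have := defl_iso_comp hE (hpbsq.isoIsPullback _ _ hpb'') hd''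
    rwa [IsPullback.isoIsPullback_hom_fst] at this
  obtain ⟨V₀, w₀, hcV₀⟩ := hdefl
  have hconf : E.IsConflation (f₁ ≫ biprod.inl) (biprod.map g₁ (𝟙 P)) := by
    refine conf_of_isKernel hE hcV₀ ?_ ?_ ?_
    · rw [Category.assoc, biprod.inl_map, ← Category.assoc, hE.comp_zero hpres, zero_comp]
    · have : Mono f₁ := conf_mono hE hpres
      exact mono_comp _ _
    · intro T t ht
      have ht1 : (t ≫ biprod.fst) ≫ g₁ = 0 := by
        rw [Category.assoc, ← biprod.map_fst g₁ (𝟙 P), ← Category.assoc, ht, zero_comp]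
      have ht2 : t ≫ biprod.snd = 0 := by
        have : t ≫ biprod.map g₁ (𝟙 P) ≫ biprod.snd = 0 := by
          rw [← Category.assoc, ht, zero_comp]
        rwa [biprod.map_snd, Category.comp_id] at this
      obtain ⟨u, hu⟩ := conf_lift hE hpres (t ≫ biprod.fst) ht1
      refine ⟨u, biprod.hom_ext _ _ ?_ ?_⟩
      · simpa [hu]
      · simpa [ht2]
  refine ⟨P₀ ⊞ P, f₁ ≫ biprod.inl, biprod.map g₁ (𝟙 P) ≫ ψ.hom,
    proj_biprod hE hP₀ hPp, conf_tgt hE ψ hconf⟩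

/-- The fundamental dimension-shifting lemma: for a conflation `K ↣ B ↠ M` with `B ∈ X`,
`Extᵐ⁺¹(K, Y) = 0` iff `Extᵐ⁺²(M, Y) = 0`, for `Y ∈ X^⊥`. -/
theorem sh (hE : E.IsExactCategory) (hproj : E.EnoughProjectives) {X : Set A}
    (hher1 : ∀ ⦃K B C : A⦄ ⦃f : K ⟶ B⦄ ⦃g : B ⟶ C⦄,
      E.IsConflation f g → B ∈ X → C ∈ X → K ∈ X)
    (hprojX : ∀ ⦃P : A⦄, E.ProjObj P → P ∈ X)
    {Y : A} (hY : Y ∈ E.rightPerp X) :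
    ∀ (m : ℕ) {K B M : A} {f : K ⟶ B} {g : B ⟶ M},
      E.IsConflation f g → B ∈ X → (ExtZero E (m + 1) K Y ↔ ExtZero E (m + 2) M Y) := by
  intro m
  induction m with
  | zero =>
    intro K B M f g hc hB
    constructor
    · intro hK
      intro L P f' g' hP hc'
      obtain ⟨D, d₁, d₂, k, l, hck, hcl, hk, hl⟩ := pullback_both hE hc hc'
      have hD : E.Ext1Zero D Y := ext1_extension hE hck hK (ext1_of_proj hE hP)
      exact ext1_kernel hE hproj hher1 hprojX hY hcl hB hD
    · intro hM
      obtain ⟨L, P, f', g', hP, hc'⟩ := hproj M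
      have hL : E.Ext1Zero L Y := hM hP hc'
      obtain ⟨D, d₁, d₂, k, l, hck, hcl, hk, hl⟩ := pullback_both hE hc hc'
      have hD : E.Ext1Zero D Y := ext1_extension hE hcl hL (hY B hB)
      obtain ⟨sP, hsP⟩ := hP ⟨_, _, hck⟩ (𝟙 P)
      obtain ⟨rK, hrK, _⟩ := retr_of_sect hE hck hsP
      exact ext1_retract hE hrK hD
  | succ m ih =>
    intro K B M f g hc hB
    have stepA : ∀ {K' D P : A} {k : K' ⟶ D} {d : D ⟶ P},
        E.IsConflation k d → E.ProjObj P →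
        ExtZero E (m + 2) K' Y → ExtZero E (m + 2) D Y := by
      intro K' D P k d hck hP hK'
      intro D₁ Q q₁ q₂ hQ hcq
      obtain ⟨V, w, a₁, p₁, hcV, hcA, ha₁, hp₁⟩ := noether hE hcq hck
      obtain ⟨sV, hsV⟩ := hP ⟨_, _, hcV⟩ (𝟙 P)
      obtain ⟨rV, hrV, _⟩ := retr_of_sect hE hcV hsV
      exact hK' (proj_retract w rV hrV hQ) hcA
    have stepB : ∀ {L D B' : A} {l : L ⟶ D} {δ : D ⟶ B'},
        E.IsConflation l δ → B' ∈ X →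
        (ExtZero E (m + 2) D Y ↔ ExtZero E (m + 2) L Y) := by
      intro L D B' l δ hcl hB'
      constructor
      · intro hD
        obtain ⟨D₁, Q, q₁, q₂, hQ, hcq⟩ := hproj D
        obtain ⟨V, w, a₁, p₁, hcV, hcA, ha₁, hp₁⟩ := noether hE hcq hcl
        exact (ih hcA (hher1 hcV (hprojX hQ) hB')).mp (hD hQ hcq)
      · intro hL
        intro D₁ Q q₁ q₂ hQ hcq
        obtain ⟨V, w, a₁, p₁, hcV, hcA, ha₁, hp₁⟩ := noether hE hcq hcl
        exact (ih hcA (hher1 hcV (hprojX hQ) hB')).mpr hL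
    have stepD : ∀ {K' D P : A} {k : K' ⟶ D} {d : D ⟶ P},
        E.IsConflation k d → E.ProjObj P →
        ExtZero E (m + 2) D Y → ExtZero E (m + 2) K' Y := by
      intro K' D P k d hck hP hD
      intro K₁ P₀ f₁ g₁ hP₀ hpres
      obtain ⟨sP, hsP⟩ := hP ⟨_, _, hck⟩ (𝟙 P)
      obtain ⟨Q, f', g', hQproj, hcQ⟩ := biprod_pres hE hck hsP hP₀ hP hpres
      exact hD hQproj hcQ
    constructor
    · intro hK
      intro L P f' g' hP hc'
      obtain ⟨D, d₁, d₂, k, l, hck, hcl, hk, hl⟩ := pullback_both hE hc hc'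
      exact (stepB hcl hB).mp (stepA hck hP hK)
    · intro hM
      obtain ⟨L, P, f', g', hP, hc'⟩ := hproj M
      have hL : ExtZero E (m + 2) L Y := hM hP hc'
      obtain ⟨D, d₁, d₂, k, l, hck, hcl, hk, hl⟩ := pullback_both hE hc hc'
      exact stepD hck hP ((stepB hcl hB).mpr hL)

/-- Objects of `X` have all higher Ext-groups vanishing against `Y ∈ X^⊥`. -/
theorem extZero_of_memX (hE : E.IsExactCategory) {X : Set A}
    (hher1 : ∀ ⦃K B C : A⦄ ⦃f : K ⟶ B⦄ ⦃g : B ⟶ C⦄,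
      E.IsConflation f g → B ∈ X → C ∈ X → K ∈ X)
    (hprojX : ∀ ⦃P : A⦄, E.ProjObj P → P ∈ X)
    {Y : A} (hY : Y ∈ E.rightPerp X) :
    ∀ (m : ℕ) {M : A}, M ∈ X → ExtZero E (m + 1) M Y := by
  intro m
  induction m with
  | zero => intro M hM; exact hY M hM
  | succ m ih =>
    intro M hM
    intro K P f g hP hc
    exact ih (hher1 hc (hprojX hP) hM)

/-- From an `X`-resolution of length `n` ending in an object of `X`, all Ext-groups
`Extⁿ⁺ⁱ(M, Y)` vanish. -/
theorem ext_of_syz (hE : E.IsExactCategory) (hproj : E.EnoughProjectives) {X : Set A}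
    (hher1 : ∀ ⦃K B C : A⦄ ⦃f : K ⟶ B⦄ ⦃g : B ⟶ C⦄,
      E.IsConflation f g → B ∈ X → C ∈ X → K ∈ X)
    (hprojX : ∀ ⦃P : A⦄, E.ProjObj P → P ∈ X)
    (hXiso : ∀ ⦃K M : A⦄, (K ≅ M) → K ∈ X → M ∈ X)
    {Y : A} (hY : Y ∈ E.rightPerp X) :
    ∀ (n : ℕ) {K M : A}, SyzOf E X n K M → K ∈ X →
      ∀ i : ℕ, 1 ≤ i → ExtZero E (n + i) M Y := by
  intro n
  induction n with
  | zero =>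
    intro K M hsyz hK i hi
    obtain ⟨e⟩ := hsyz
    obtain ⟨i, rfl⟩ := Nat.exists_eq_add_of_le hi
    have : ExtZero E (i + 1) M Y := extZero_of_memX hE hher1 hprojX hY i (hXiso e hK)
    have heq : (0 : ℕ) + (1 + i) = i + 1 := by omega
    rw [heq]
    exact this
  | succ n ih =>
    intro K M hsyz hK i hi
    obtain ⟨K₁, X₀, f, g, hX₀, hc, hsyz'⟩ := hsyz
    obtain ⟨i, rfl⟩ := Nat.exists_eq_add_of_le hi
    have h1 : ExtZero E (n + (1 + i)) K₁ Y := ih hsyz' hK (1 + i) (by omega)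
    have h2 : ExtZero E ((n + i) + 1) K₁ Y := by
      have heq : n + (1 + i) = (n + i) + 1 := by omega
      rwa [heq] at h1
    have h3 : ExtZero E ((n + i) + 2) M Y :=
      (sh hE hproj hher1 hprojX hY (n + i) hc hX₀).mp h2
    have heq : n + 1 + (1 + i) = (n + i) + 2 := by omega
    rw [heq]
    exact h3

/-- Conversely, if all Ext-groups `Extⁿ⁺ⁱ(M, Y)` vanish for `Y ∈ X^⊥`, then every `n`-th
`X`-syzygy of `M` lies in `X`. -/
theorem syz_mem_of_ext (hE : E.IsExactCategory) (hproj : E.EnoughProjectives) {X : Set A}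
    (hher1 : ∀ ⦃K B C : A⦄ ⦃f : K ⟶ B⦄ ⦃g : B ⟶ C⦄,
      E.IsConflation f g → B ∈ X → C ∈ X → K ∈ X)
    (hprojX : ∀ ⦃P : A⦄, E.ProjObj P → P ∈ X)
    (hXiso : ∀ ⦃K M : A⦄, (K ≅ M) → K ∈ X → M ∈ X)
    (hXof : ∀ ⦃M : A⦄, (∀ L ∈ E.rightPerp X, E.Ext1Zero M L) → M ∈ X) :
    ∀ (n : ℕ) {K M : A}, SyzOf E X n K M →
      (∀ L ∈ E.rightPerp X, ∀ i : ℕ, 1 ≤ i → ExtZero E (n + i) M L) → K ∈ X := by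
  intro n
  induction n with
  | zero =>
    intro K M hsyz h4
    obtain ⟨e⟩ := hsyz
    refine hXiso e.symm (hXof ?_)
    intro L hL
    have := h4 L hL 1 le_rfl
    exact this
  | succ n ih =>
    intro K M hsyz h4
    obtain ⟨K₁, X₀, f, g, hX₀, hc, hsyz'⟩ := hsyz
    refine ih hsyz' ?_
    intro L hL i hi
    obtain ⟨i, rfl⟩ := Nat.exists_eq_add_of_le hi
    have h1 : ExtZero E ((n + i) + 2) M L := by
      have := h4 L hL (1 + i) (by omega)
      have heq : n + 1 + (1 + i) = (n + i) + 2 := by omega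
      rwa [heq] at this
    have h2 : ExtZero E ((n + i) + 1) K₁ L :=
      (sh hE hproj hher1 hprojX hL (n + i) hc hX₀).mpr h1
    have heq : n + (1 + i) = (n + i) + 1 := by omega
    rw [heq]
    exact h2

/-- Existence of `X`-syzygies, from completeness of the cotorsion pair. -/
theorem syz_exists {X : Set A}
    (happrox : ∀ M : A, ∃ (Y' X' : A) (f : Y' ⟶ X') (g : X' ⟶ M),
      Y' ∈ E.rightPerp X ∧ X' ∈ X ∧ E.IsConflation f g) :
    ∀ (n : ℕ) (M : A), ∃ K, SyzOf E X n K M := by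
  intro n
  induction n with
  | zero => intro M; exact ⟨M, ⟨Iso.refl M⟩⟩
  | succ n ih =>
    intro M
    obtain ⟨Y', X', f, g, _, hX', hc⟩ := happrox M
    obtain ⟨K, hK⟩ := ih Y'
    exact ⟨K, Y', X', f, g, hX', hc, hK⟩

/-- Extending a syzygy sequence by one step. -/
theorem syz_ext (hE : E.IsExactCategory) {X : Set A} :
    ∀ (n : ℕ) {K M K' X₀ : A} (f : K' ⟶ X₀) (g : X₀ ⟶ K), X₀ ∈ X →
      E.IsConflation f g → SyzOf E X n K M → SyzOf E X (n + 1) K' M := by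
  intro n
  induction n with
  | zero =>
    intro K M K' X₀ f g hX₀ hc hsyz
    obtain ⟨e⟩ := hsyz
    exact ⟨K', X₀, f, g ≫ e.hom, hX₀, conf_tgt hE e hc, ⟨Iso.refl K'⟩⟩
  | succ n ih =>
    intro K M K' X₀ f g hX₀ hc hsyz
    obtain ⟨K₁, X0, f0, g0, hX0, hc0, hsyz'⟩ := hsyz
    exact ⟨K₁, X0, f0, g0, hX0, hc0, ih f g hX₀ hc hsyz'⟩

/-- `pdLE` is monotone in the length. -/
theorem pdLE_mono (hE : E.IsExactCategory) {X : Set A}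
    (hXof : ∀ ⦃M : A⦄, (∀ L ∈ E.rightPerp X, E.Ext1Zero M L) → M ∈ X)
    {M : A} {m n : ℕ} (hmn : m ≤ n) (h : E.pdLE X m M) : E.pdLE X n M := by
  induction n, hmn using Nat.le_induction with
  | base => exact h
  | succ n _ ih =>
    obtain ⟨K, hK, hsyz⟩ := ih
    obtain ⟨Z, z, hcz⟩ := hE.id_deflation K
    have hZ : IsZero Z := isZero_of_id_conf hE hcz
    have hZX : Z ∈ X := by
      refine hXof ?_
      intro L _ W a b hcb
      exact ⟨0, by rw [zero_comp, ← hZ.eq_of_src (𝟙 Z) 0]⟩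
    exact ⟨Z, hZX, syz_ext hE n z (𝟙 K) hK hcz hsyz⟩

end ExactStruct

end Aux

/-- Characterizations of objects of `X`-projective dimension at most `n`
for a complete hereditary cotorsion pair `(X, X^⊥)` in a WIC exact category with enough
projectives and injectives. -/
theorem statement0 {A : Type u} [Category.{v} A] [Preadditive A]
    (E : ExactStruct A) (hE : E.IsExactCategory) (hwic : WIC A)
    (hproj : E.EnoughProjectives) (hinj : E.EnoughInjectives)
    (X : Set A)
    (hcomp : E.IsCompleteCP X (E.rightPerp X))
    (hher : E.HereditaryClasses X (E.rightPerp X))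
    (M : A) (n : ℕ) :
    List.TFAE
      [E.pdim X M ≤ (n : ℕ∞),
       E.pdLE X n M,
       ∀ K : A, SyzOf E X n K M → K ∈ X,
       ∀ Y ∈ E.rightPerp X, ∀ i : ℕ, 1 ≤ i → ExtZero E (n + i) M Y] := by

  have hmemX : ∀ ⦃M₀ : A⦄, M₀ ∈ X ↔ ∀ L ∈ E.rightPerp X, E.Ext1Zero M₀ L := by
    intro M₀
    constructor
    · intro h L hL
      exact hL M₀ h
    · intro h
      rw [← hcomp.1.2]
      exact h
  have hXof : ∀ ⦃M₀ : A⦄, (∀ L ∈ E.rightPerp X, E.Ext1Zero M₀ L) → M₀ ∈ X :=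
    fun M₀ h => hmemX.mpr h
  have hXiso : ∀ ⦃K M₀ : A⦄, (K ≅ M₀) → K ∈ X → M₀ ∈ X := by
    intro K M₀ e hK
    exact hXof (fun L hL => ExactStruct.ext1_iso hE e (hmemX.mp hK L hL))
  have hprojX : ∀ ⦃P : A⦄, E.ProjObj P → P ∈ X :=
    fun P hP => hXof (fun L _ => ExactStruct.ext1_of_proj hE hP)
  have hher1 := hher.1
  tfae_have 2 → 1
  | h2 => sInf_le ⟨n, h2, rfl⟩
  tfae_have 1 → 2
  | h1 => by
    have hne : ∃ m, E.pdLE X m M ∧ m ≤ n := by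
      by_contra hcon
      push_neg at hcon
      have hlb : ((n : ℕ∞) + 1) ≤ E.pdim X M := by
        apply le_sInf
        rintro b ⟨m, hm, rfl⟩
        have h1m : n < m := hcon m hm
        show ((n : ℕ∞) + 1) ≤ (m : ℕ∞)
        exact_mod_cast Nat.succ_le_of_lt h1m
      have : ((n : ℕ∞) + 1) ≤ (n : ℕ∞) := hlb.trans h1
      have hn1 : ((n + 1 : ℕ) : ℕ∞) ≤ ((n : ℕ) : ℕ∞) := by
        rwa [Nat.cast_add, Nat.cast_one]
      exact absurd (Nat.cast_le.mp hn1) (by omega)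
    obtain ⟨m, hm, hmn⟩ := hne
    exact ExactStruct.pdLE_mono hE hXof hmn hm
  tfae_have 2 → 4
  | h2 => by
    obtain ⟨K, hK, hsyz⟩ := h2
    intro Y hY i hi
    exact ExactStruct.ext_of_syz hE hproj hher1 hprojX hXiso hY n hsyz hK i hi
  tfae_have 4 → 3
  | h4 => fun K hsyz =>
    ExactStruct.syz_mem_of_ext hE hproj hher1 hprojX hXiso hXof n hsyz h4
  tfae_have 3 → 2
  | h3 => by
    obtain ⟨K, hsyz⟩ := ExactStruct.syz_exists hcomp.2.1 n M
    exact ⟨K, h3 K hsyz, hsyz⟩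
  tfae_finish

end CotorsionPaper
end

section
/- Let A be a weakly idempotent complete exact category with enough projectives and injectives, and let (C, W, F) be a hereditary Hovey triple in A such that the cotorsion pair (C, W ∩ F) is right extendable. Then for any object M of A and any integer n ≥ 0 the following are equivalent: (1) M ∈ F_n; (2) there is a conflation M ↣ G ↠ C′ with G ∈ F and C′ ∈ (W ∩ F)_{n−1} such that 0 → Hom_A(X, M) → Hom_A(X, G) → Hom_A(X, C′) → 0 is exact for all X ∈ ⊥((W ∩ F)_n) (for n = 0, (W ∩ F)_{n−1} is interpreted as {0}); (3) Ext^1_A(H, M) = 0 for every H ∈ W ∩ ⊥((W ∩ F)_n); (4) there is a conflation N ↣ L ↠ M with L ∈ (W ∩ F)_n and N ∈ F. -/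
open CategoryTheory CategoryTheory.Limits

universe w v u v₁ u₁ v₂ u₂ v₃ u₃

namespace CotorsionPaper

section Toolkit

variable {A : Type u} [Category.{v} A] [Preadditive A] {E : ExactStruct A}

lemma conflMono (hE : E.IsExactCategory) {K B Cc : A} {f : K ⟶ B} {g : B ⟶ Cc}
    (hc : E.IsConflation f g) : Mono f := by
  obtain ⟨hl⟩ := hE.isKernel hc
  constructor
  intro W a b hab
  refine Fork.IsLimit.hom_ext hl ?_
  simpa using hab

lemma conflEpi (hE : E.IsExactCategory) {K B Cc : A} {f : K ⟶ B} {g : B ⟶ Cc}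
    (hc : E.IsConflation f g) : Epi g := by
  obtain ⟨hl⟩ := hE.isCokernel hc
  constructor
  intro W a b hab
  refine Cofork.IsColimit.hom_ext hl ?_
  simpa using hab

/-- Maps killing the deflation factor through the inflation. -/
lemma conflLift (hE : E.IsExactCategory) {K B Cc : A} {f : K ⟶ B} {g : B ⟶ Cc}
    (hc : E.IsConflation f g) {T : A} (k : T ⟶ B) (hk : k ≫ g = 0) :
    ∃ l : T ⟶ K, l ≫ f = k := by
  obtain ⟨hl⟩ := hE.isKernel hc
  obtain ⟨l, hl'⟩ := Fork.IsLimit.lift' hl k (by simp [hk])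
  exact ⟨l, by simpa using hl'⟩

/-- Maps killed by the inflation factor through the deflation. -/
lemma conflDesc (hE : E.IsExactCategory) {K B Cc : A} {f : K ⟶ B} {g : B ⟶ Cc}
    (hc : E.IsConflation f g) {T : A} (k : B ⟶ T) (hk : f ≫ k = 0) :
    ∃ d : Cc ⟶ T, g ≫ d = k := by
  obtain ⟨hl⟩ := hE.isCokernel hc
  obtain ⟨d, hd⟩ := Cofork.IsColimit.desc' hl k (by simp [hk])
  exact ⟨d, by simpa using hd⟩

/-- A section of the deflation yields a retraction of the inflation. -/
lemma retractionOfSection (hE : E.IsExactCategory) {K B Cc : A} {f : K ⟶ B} {g : B ⟶ Cc}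
    (hc : E.IsConflation f g) {s : Cc ⟶ B} (hs : s ≫ g = 𝟙 Cc) :
    ∃ r : B ⟶ K, f ≫ r = 𝟙 K := by
  have h0 : (𝟙 B - g ≫ s) ≫ g = 0 := by
    simp [Preadditive.sub_comp, Category.assoc, hs]
  obtain ⟨r, hr⟩ := conflLift hE hc _ h0
  refine ⟨r, ?_⟩
  haveI := conflMono hE hc
  rw [← cancel_mono f]
  rw [Category.assoc, hr]
  simp [Preadditive.comp_sub, ← Category.assoc, hE.comp_zero hc]

/-- `Ext¹(C, −) = 0` is invariant under isomorphism in the second variable. -/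
lemma ext1Zero_iso_right (hE : E.IsExactCategory) {Cc M M' : A} (e : M ≅ M')
    (h : E.Ext1Zero Cc M) : E.Ext1Zero Cc M' := by
  intro Eo f g hc
  have hc' : E.IsConflation (e.hom ≫ f) g :=
    hE.conflation_of_iso e.symm (Iso.refl _) (Iso.refl _) hc (by simp) (by simp)
  exact h hc'

/-- Pushout of a conflation along an arbitrary map, with identification of the cokernel. -/
lemma pushoutConfl (hE : E.IsExactCategory) {K B Cc K' : A} {f : K ⟶ B} {g : B ⟶ Cc}
    (hc : E.IsConflation f g) (h : K ⟶ K') :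
    ∃ (B' : A) (f' : K' ⟶ B') (v : B ⟶ B') (g' : B' ⟶ Cc),
      E.IsConflation f' g' ∧ IsPushout f h v f' ∧ v ≫ g' = g := by
  obtain ⟨B', f', v, hinf', hpo⟩ := hE.inflation_pushout h ⟨Cc, g, hc⟩
  obtain ⟨Z, g₀, hc₀⟩ := hinf'
  have hsq : f ≫ g = h ≫ (0 : K' ⟶ Cc) := by simp [hE.comp_zero hc]
  set g' := hpo.desc g 0 hsq with hg'def
  have hvg' : v ≫ g' = g := hpo.inl_desc g 0 hsq
  have hf'g' : f' ≫ g' = 0 := hpo.inr_desc g 0 hsq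
  obtain ⟨t, ht⟩ := conflDesc hE hc₀ g' hf'g'
  have h1 : f ≫ (v ≫ g₀) = 0 := by
    rw [← Category.assoc, hpo.w, Category.assoc, hE.comp_zero hc₀, comp_zero]
  obtain ⟨t', ht'⟩ := conflDesc hE hc (v ≫ g₀) h1
  haveI hge : Epi g := conflEpi hE hc
  haveI hg0e : Epi g₀ := conflEpi hE hc₀
  have hg't' : g' ≫ t' = g₀ := by
    apply hpo.hom_ext
    · rw [← Category.assoc, hvg', ht']
    · rw [← Category.assoc, hf'g', zero_comp]
      exact (hE.comp_zero hc₀).symm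
  have htt' : t ≫ t' = 𝟙 Z := by
    rw [← cancel_epi g₀, ← Category.assoc, ht, hg't', Category.comp_id]
  have ht't : t' ≫ t = 𝟙 Cc := by
    rw [← cancel_epi g, ← Category.assoc, ht', Category.assoc, ht, hvg', Category.comp_id]
  have hconf : E.IsConflation f' g' := by
    refine hE.conflation_of_iso (Iso.refl K') (Iso.refl B')
      (⟨t, t', htt', ht't⟩ : Z ≅ Cc) hc₀ (by simp) ?_
    simpa using ht.symm
  exact ⟨B', f', v, g', hconf, hpo, hvg'⟩

/-- Pullback of a conflation along an arbitrary map, with identification of the kernel. -/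
lemma pullbackConfl (hE : E.IsExactCategory) {K B Cc T : A} {f : K ⟶ B} {g : B ⟶ Cc}
    (hc : E.IsConflation f g) (h : T ⟶ Cc) :
    ∃ (B' : A) (f' : K ⟶ B') (v : B' ⟶ B) (g' : B' ⟶ T),
      E.IsConflation f' g' ∧ IsPullback g' v h g ∧ f' ≫ v = f := by
  obtain ⟨B', g', v, hdef', hpb⟩ := hE.deflation_pullback h ⟨K, f, hc⟩
  obtain ⟨K₀, f₀, hc₀⟩ := hdef'
  have hsq : (0 : K ⟶ T) ≫ h = f ≫ g := by simp [hE.comp_zero hc]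
  set f' := hpb.lift 0 f hsq with hf'def
  have hf'g' : f' ≫ g' = 0 := hpb.lift_fst 0 f hsq
  have hf'v : f' ≫ v = f := hpb.lift_snd 0 f hsq
  obtain ⟨t, ht⟩ := conflLift hE hc₀ f' hf'g'
  have h1 : (f₀ ≫ v) ≫ g = 0 := by
    rw [Category.assoc, ← hpb.w, ← Category.assoc, hE.comp_zero hc₀, zero_comp]
  obtain ⟨t', ht'⟩ := conflLift hE hc (f₀ ≫ v) h1
  haveI hfm : Mono f := conflMono hE hc
  haveI hf0m : Mono f₀ := conflMono hE hc₀
  have ht'f' : t' ≫ f' = f₀ := by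
    apply hpb.hom_ext
    · rw [Category.assoc, hf'g', comp_zero, hE.comp_zero hc₀]
    · rw [Category.assoc, hf'v, ht']
  have htt' : t ≫ t' = 𝟙 K := by
    rw [← cancel_mono f, Category.assoc, ht', ← Category.assoc, ht, hf'v, Category.id_comp]
  have ht't : t' ≫ t = 𝟙 K₀ := by
    rw [← cancel_mono f₀, Category.assoc, ht, ht'f', Category.id_comp]
  have hconf : E.IsConflation f' g' := by
    refine hE.conflation_of_iso (⟨t', t, ht't, htt'⟩ : K₀ ≅ K) (Iso.refl B')
      (Iso.refl T) hc₀ ?_ (by simp)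
    simpa using ht'f'
  exact ⟨B', f', v, g', hconf, hpb, hf'v⟩

/-- Splicing: pushing out a conflation starting at `L` along a deflation out of `L`. -/
lemma spliceConfl (hE : E.IsExactCategory) {N L M Y0 C' : A}
    {fN : N ⟶ L} {g : L ⟶ M} (hc1 : E.IsConflation fN g)
    {u : L ⟶ Y0} {w : Y0 ⟶ C'} (hc2 : E.IsConflation u w) :
    ∃ (P : A) (v : Y0 ⟶ P) (f' : M ⟶ P) (g' : P ⟶ C'),
      E.IsConflation (fN ≫ u) v ∧ E.IsConflation f' g' ∧
      u ≫ v = g ≫ f' ∧ v ≫ g' = w := by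
  obtain ⟨P, f', v, g', hc3, hpo, hvg'⟩ := pushoutConfl hE hc2 g
  have hinf : E.Inflation (fN ≫ u) :=
    hE.inflation_comp ⟨_, _, hc1⟩ ⟨_, _, hc2⟩
  obtain ⟨Q, q, hcq⟩ := hinf
  have h1 : fN ≫ (u ≫ q) = 0 := by rw [← Category.assoc]; exact hE.comp_zero hcq
  obtain ⟨gt, hgt⟩ := conflDesc hE hc1 (u ≫ q) h1
  have hdesc : u ≫ q = g ≫ gt := hgt.symm
  set c := hpo.desc q gt hdesc with hcdef
  have hvc : v ≫ c = q := hpo.inl_desc q gt hdesc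
  have hf'c : f' ≫ c = gt := hpo.inr_desc q gt hdesc
  have h2 : (fN ≫ u) ≫ v = 0 := by
    rw [Category.assoc, hpo.w, ← Category.assoc, hE.comp_zero hc1, zero_comp]
  obtain ⟨d, hd⟩ := conflDesc hE hcq v h2
  haveI hqe : Epi q := conflEpi hE hcq
  haveI hge : Epi g := conflEpi hE hc1
  have hdc : d ≫ c = 𝟙 Q := by
    rw [← cancel_epi q, ← Category.assoc, hd, hvc, Category.comp_id]
  have hgtd : gt ≫ d = f' := by
    rw [← cancel_epi g, ← Category.assoc, hgt, Category.assoc, hd, hpo.w]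
  have hcd : c ≫ d = 𝟙 P := by
    apply hpo.hom_ext
    · rw [← Category.assoc, hvc, hd, Category.comp_id]
    · rw [← Category.assoc, hf'c, hgtd, Category.comp_id]
  have hconf : E.IsConflation (fN ≫ u) v := by
    refine hE.conflation_of_iso (Iso.refl N) (Iso.refl Y0)
      (⟨d, c, hdc, hcd⟩ : Q ≅ P) hcq (by simp) ?_
    simpa using hd.symm
  exact ⟨P, v, f', g', hconf, hc3, hpo.w, hvg'⟩

/-- Pushout of a span of two inflations out of `V`. -/
lemma pushoutSpan (hE : E.IsExactCategory) {V Eo X Y0 V1 : A}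
    {a : V ⟶ Eo} {b : Eo ⟶ X} (hc1 : E.IsConflation a b)
    {h : V ⟶ Y0} {w : Y0 ⟶ V1} (hc2 : E.IsConflation h w) :
    ∃ (P : A) (vE : Eo ⟶ P) (a' : Y0 ⟶ P) (bP : P ⟶ X) (wP : P ⟶ V1),
      E.IsConflation a' bP ∧ E.IsConflation vE wP ∧
      vE ≫ bP = b ∧ a' ≫ wP = w ∧ a' ≫ bP = 0 := by
  obtain ⟨P, vE, a', wP, hcvE, hpo1, ha'wP⟩ := pushoutConfl hE hc2 a
  obtain ⟨P₃, a₂, v₃, b₃, hca₂, hpo2, hv₃b₃⟩ := pushoutConfl hE hc1 h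
  have hs1 : h ≫ a₂ = a ≫ v₃ := hpo2.w.symm
  set c := hpo1.desc a₂ v₃ hs1 with hcdef
  have ha'c : a' ≫ c = a₂ := hpo1.inl_desc a₂ v₃ hs1
  have hvEc : vE ≫ c = v₃ := hpo1.inr_desc a₂ v₃ hs1
  have hs2' : a ≫ vE = h ≫ a' := hpo1.w.symm
  set d := hpo2.desc vE a' hs2' with hddef
  have hvEd : v₃ ≫ d = vE := hpo2.inl_desc vE a' hs2'
  have ha₂d : a₂ ≫ d = a' := hpo2.inr_desc vE a' hs2'
  have hcd : c ≫ d = 𝟙 P := by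
    apply hpo1.hom_ext
    · rw [← Category.assoc, ha'c, ha₂d, Category.comp_id]
    · rw [← Category.assoc, hvEc, hvEd, Category.comp_id]
  have hdc : d ≫ c = 𝟙 P₃ := by
    apply hpo2.hom_ext
    · rw [← Category.assoc, hvEd, hvEc, Category.comp_id]
    · rw [← Category.assoc, ha₂d, ha'c, Category.comp_id]
  set bP := c ≫ b₃ with hbPdef
  have hconf : E.IsConflation a' bP := by
    refine hE.conflation_of_iso (Iso.refl Y0) (⟨d, c, hdc, hcd⟩ : P₃ ≅ P)
      (Iso.refl X) hca₂ ?_ ?_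
    · simpa using ha₂d.symm
    · show d ≫ bP = b₃ ≫ 𝟙 X
      rw [hbPdef, ← Category.assoc, hdc, Category.id_comp, Category.comp_id]
  have hvEbP : vE ≫ bP = b := by
    rw [hbPdef, ← Category.assoc, hvEc, hv₃b₃]
  have ha'bP : a' ≫ bP = 0 := hE.comp_zero hconf
  exact ⟨P, vE, a', bP, wP, hconf, hcvE, hvEbP, ha'wP, ha'bP⟩

/-- Lifting along a deflation when `Ext¹(X, ker) = 0`. -/
lemma liftAlongDeflation (hE : E.IsExactCategory) {K B M X : A}
    {f : K ⟶ B} {g : B ⟶ M} (hc : E.IsConflation f g)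
    (hx : E.Ext1Zero X K) (h : X ⟶ M) : ∃ l : X ⟶ B, l ≫ g = h := by
  obtain ⟨B', f', v, g', hc', hpb, hf'v⟩ := pullbackConfl hE hc h
  obtain ⟨s, hs⟩ := hx hc'
  refine ⟨s ≫ v, ?_⟩
  rw [Category.assoc, ← hpb.w, ← Category.assoc, hs, Category.id_comp]

/-- Extending along an inflation when `Ext¹(coker, T) = 0`. -/
lemma extendAlongInflation (hE : E.IsExactCategory) {K B Cc T : A}
    {f : K ⟶ B} {g : B ⟶ Cc} (hc : E.IsConflation f g)
    (hx : E.Ext1Zero Cc T) (h : K ⟶ T) : ∃ l : B ⟶ T, f ≫ l = h := by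
  obtain ⟨B', f', v, g', hc', hpo, hvg'⟩ := pushoutConfl hE hc h
  obtain ⟨s, hs⟩ := hx hc'
  obtain ⟨r, hr⟩ := retractionOfSection hE hc' hs
  refine ⟨v ≫ r, ?_⟩
  rw [← Category.assoc, hpo.w, Category.assoc, hr, Category.comp_id]

/-- If every map out of a syzygy extends to the projective, `Ext¹(H, T) = 0`. -/
lemma ext1Zero_of_factor (hE : E.IsExactCategory) {K P H T : A}
    {κ : K ⟶ P} {π : P ⟶ H} (hc : E.IsConflation κ π) (hP : E.ProjObj P)
    (hfac : ∀ h : K ⟶ T, ∃ l : P ⟶ T, κ ≫ l = h) : E.Ext1Zero H T := by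
  intro Eo α β hc2
  obtain ⟨p, hp⟩ := hP ⟨_, _, hc2⟩ π
  have h1 : (κ ≫ p) ≫ β = 0 := by
    rw [Category.assoc, hp, hE.comp_zero hc]
  obtain ⟨hb, hhb⟩ := conflLift hE hc2 (κ ≫ p) h1
  obtain ⟨l, hl⟩ := hfac hb
  have h2 : κ ≫ (p - l ≫ α) = 0 := by
    rw [Preadditive.comp_sub, ← Category.assoc, hl, hhb, sub_self]
  obtain ⟨s, hs⟩ := conflDesc hE hc (p - l ≫ α) h2
  refine ⟨s, ?_⟩
  haveI := conflEpi hE hc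
  rw [← cancel_epi π, ← Category.assoc, hs, Preadditive.sub_comp, Category.assoc,
    hE.comp_zero hc2, comp_zero, sub_zero, hp, Category.comp_id]

/-- Surjectivity of `Hom(K, B) → Hom(K, V')` using `Ext¹(H, V') = 0` and projectivity. -/
lemma surjOfProj (hE : E.IsExactCategory) {K P H A0 B V' : A}
    {κ : K ⟶ P} {π : P ⟶ H} (hcsyz : E.IsConflation κ π) (hP : E.ProjObj P)
    {f : A0 ⟶ B} {g : B ⟶ V'} (hcdefl : E.IsConflation f g)
    (hx : E.Ext1Zero H V') (d : K ⟶ V') : ∃ t : K ⟶ B, t ≫ g = d := by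
  obtain ⟨l, hl⟩ := extendAlongInflation hE hcsyz hx d
  obtain ⟨lh, hlh⟩ := hP ⟨_, _, hcdefl⟩ l
  exact ⟨κ ≫ lh, by rw [Category.assoc, hlh, hl]⟩

/-- `Ext¹(X, V) = 0` via a cosyzygy: vanishing on the middle and surjectivity onto the
cosyzygy. -/
lemma ext1Zero_of_cosyz (hE : E.IsExactCategory) {V Y0 V1 X : A}
    {h : V ⟶ Y0} {w : Y0 ⟶ V1} (hc : E.IsConflation h w)
    (h0 : E.Ext1Zero X Y0) (hsur : ∀ t1 : X ⟶ V1, ∃ t : X ⟶ Y0, t ≫ w = t1) :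
    E.Ext1Zero X V := by
  intro Eo a b hc2
  obtain ⟨P, vE, a', bP, wP, hca', hcvE, hvb, ha'w, ha'b⟩ := pushoutSpan hE hc2 hc
  obtain ⟨s, hs⟩ := h0 hca'
  obtain ⟨t, ht⟩ := hsur (s ≫ wP)
  have hk : (s - t ≫ a') ≫ wP = 0 := by
    rw [Preadditive.sub_comp, Category.assoc, ha'w, ht, sub_self]
  obtain ⟨σ, hσ⟩ := conflLift hE hcvE (s - t ≫ a') hk
  refine ⟨σ, ?_⟩
  rw [← hvb, ← Category.assoc, hσ, Preadditive.sub_comp, hs, Category.assoc, ha'b,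
    comp_zero, sub_zero]

/-- `Ext¹(X, coker) = 0` from `Ext¹(X, middle) = 0` and `Ext¹(ΩX, ker) = 0`. -/
lemma ext1Zero_core (hE : E.IsExactCategory) {A0 B Cc X' P X : A}
    {f : A0 ⟶ B} {g : B ⟶ Cc} (hc : E.IsConflation f g)
    {κ : X' ⟶ P} {π : P ⟶ X} (hcsyz : E.IsConflation κ π) (hP : E.ProjObj P)
    (hB : E.Ext1Zero X B) (hA : E.Ext1Zero X' A0) : E.Ext1Zero X Cc := by
  apply ext1Zero_of_factor hE hcsyz hP
  intro h
  obtain ⟨ht, hht⟩ := liftAlongDeflation hE hc hA h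
  obtain ⟨l, hl⟩ := extendAlongInflation hE hcsyz hB ht
  exact ⟨l ≫ g, by rw [← Category.assoc, hl, hht]⟩

/-- Extension closure of `Ext¹(X, −) = 0`. -/
lemma ext1Zero_ext (hE : E.IsExactCategory) {A0 B Cc X : A}
    {f : A0 ⟶ B} {g : B ⟶ Cc} (hc : E.IsConflation f g)
    (hA : E.Ext1Zero X A0) (hC : E.Ext1Zero X Cc) : E.Ext1Zero X B := by
  intro Eo α β hc2
  obtain ⟨P, v, f', g', hcfa, hcf', hsq, hvg'⟩ := spliceConfl hE hc hc2
  obtain ⟨s', hs'⟩ := hC hcf'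
  obtain ⟨σ, hσ⟩ := liftAlongDeflation hE hcfa hA s'
  refine ⟨σ, ?_⟩
  rw [← hvg', ← Category.assoc, hσ, hs']

/-- The identity inflation has a zero cokernel. -/
lemma zeroConfl (hE : E.IsExactCategory) (M : A) :
    ∃ (Z : A) (g : M ⟶ Z), E.IsConflation (𝟙 M) g ∧ IsZero Z := by
  obtain ⟨Z, g, hcg⟩ := hE.id_inflation M
  have hg0 : g = 0 := by simpa using hE.comp_zero hcg
  have hZ : IsZero Z := by
    rw [IsZero.iff_id_eq_zero]
    haveI := conflEpi hE hcg
    rw [← cancel_epi g]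
    simp [hg0]
  exact ⟨Z, g, hcg, hZ⟩

/-- Zero objects are in the right perpendicular of everything. -/
lemma zero_ext1Zero (hE : E.IsExactCategory) {Z : A} (hZ : IsZero Z) (Cc : A) :
    E.Ext1Zero Cc Z := by
  intro Eo f g hc
  have hf : f = 0 := hZ.eq_of_src f 0
  obtain ⟨u, hu⟩ := conflDesc hE hc (𝟙 Eo) (by simp [hf])
  refine ⟨u, ?_⟩
  haveI := conflEpi hE hc
  rw [← cancel_epi g, ← Category.assoc, hu, Category.id_comp, Category.comp_id]

/-- Unpacking membership of the class `Y_n`. -/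
lemma mem_idSet_iff {S : Set A} {n : ℕ} {M : A} :
    M ∈ E.idSet S n ↔ ∃ k, k ≤ n ∧ E.idLE S k M := by
  show E.idim S M ≤ (n : ℕ∞) ↔ _
  unfold ExactStruct.idim
  constructor
  · intro h
    by_contra hcon
    push_neg at hcon
    have hlb : ∀ x ∈ ((fun m : ℕ => (m : ℕ∞)) '' {m : ℕ | E.idLE S m M}),
        ((n + 1 : ℕ) : ℕ∞) ≤ x := by
      rintro x ⟨k, hk, rfl⟩
      have hkn : ¬ k ≤ n := fun h' => hcon k h' hk
      show ((n + 1 : ℕ) : ℕ∞) ≤ (k : ℕ∞)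
      exact_mod_cast Nat.succ_le_of_lt (Nat.lt_of_not_le hkn)
    have h2 := le_trans (le_sInf hlb) h
    have : (n : ℕ∞) < ((n + 1 : ℕ) : ℕ∞) := by exact_mod_cast Nat.lt_succ_self n
    exact absurd h2 (not_le.mpr this)
  · rintro ⟨k, hkn, hk⟩
    refine le_trans (sInf_le ⟨k, hk, rfl⟩) ?_
    show (k : ℕ∞) ≤ (n : ℕ∞)
    exact_mod_cast hkn

end Toolkit

/-- Characterizations of objects in `F_n`, for a hereditary Hovey
triple `(C, W, F)` whose cotorsion pair `(C, W ∩ F)` is right extendable. -/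
theorem statement6 {A : Type u} [Category.{v} A] [Preadditive A]
    (E : ExactStruct A) (hE : E.IsExactCategory) (hwic : WIC A)
    (hproj : E.EnoughProjectives) (hinj : E.EnoughInjectives)
    (C W F : Set A)
    (hH : E.IsHereditaryHoveyTriple C W F)
    (hext : E.RightExtendable C (W ∩ F))
    (M : A) (n : ℕ) :
    List.TFAE
      [M ∈ E.idSet F n,
       ∃ (G C' : A) (f : M ⟶ G) (g : G ⟶ C'),
         E.IsConflation f g ∧ G ∈ F ∧
         (match n with
          | 0 => IsZero C'
          | (m + 1) => C' ∈ E.idSet (W ∩ F) m) ∧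
         (∀ X ∈ E.leftPerp (E.idSet (W ∩ F) n),
           (∀ h₁ h₂ : X ⟶ M, h₁ ≫ f = h₂ ≫ f → h₁ = h₂) ∧
           (∀ h : X ⟶ G, h ≫ g = 0 → ∃ h' : X ⟶ M, h' ≫ f = h) ∧
           (∀ h : X ⟶ C', ∃ h' : X ⟶ G, h' ≫ g = h)),
       ∀ H ∈ W ∩ E.leftPerp (E.idSet (W ∩ F) n), E.Ext1Zero H M,
       ∃ (N L : A) (f : N ⟶ L) (g : L ⟶ M),
         E.IsConflation f g ∧ L ∈ E.idSet (W ∩ F) n ∧ N ∈ F] := by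
  classical
  -- Unpack the Hovey triple.
  obtain ⟨⟨hCP1, hCP2, hThick⟩, hHer1, hHer2⟩ := hH
  have hFperp : E.rightPerp (C ∩ W) = F := hCP1.1.1
  have hCWperp : E.leftPerp F = C ∩ W := hCP1.1.2
  have hYperp : E.rightPerp C = W ∩ F := hCP2.1.1
  have hCperp : E.leftPerp (W ∩ F) = C := hCP2.1.2
  -- Chosen syzygies.
  choose Ωo Po κo πo hProj hConfl using hproj
  -- Basic membership facts.
  have hCkills : ∀ X ∈ C, ∀ V ∈ W ∩ F, E.Ext1Zero X V := by
    intro X hX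
    rw [← hCperp] at hX
    exact hX
  have hCWkills : ∀ X ∈ C ∩ W, ∀ L ∈ F, E.Ext1Zero X L := by
    intro X hX
    rw [← hCWperp] at hX
    exact hX
  have hFiso : ∀ {M1 M2 : A}, (M1 ≅ M2) → M1 ∈ F → M2 ∈ F := by
    intro M1 M2 e h1
    rw [← hFperp] at h1 ⊢
    intro Cc hCc
    exact ext1Zero_iso_right hE e (h1 Cc hCc)
  have hYiso : ∀ {M1 M2 : A}, (M1 ≅ M2) → M1 ∈ W ∩ F → M2 ∈ W ∩ F := by
    intro M1 M2 e h1
    rw [← hYperp] at h1 ⊢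
    intro Cc hCc
    exact ext1Zero_iso_right hE e (h1 Cc hCc)
  have hYmem_id : ∀ (m : ℕ) (V : A), V ∈ W ∩ F → V ∈ E.idSet (W ∩ F) m := by
    intro m V hV
    exact mem_idSet_iff.2 ⟨0, Nat.zero_le m, V, hV, ⟨Iso.refl V⟩⟩
  have hid0 : ∀ V : A, V ∈ E.idSet (W ∩ F) 0 → V ∈ W ∩ F := by
    intro V hV
    obtain ⟨k, hk, Cf, hCf, hcos⟩ := mem_idSet_iff.1 hV
    interval_cases k
    obtain ⟨e⟩ := hcos
    exact hYiso e.symm hCf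
  have hXC : ∀ (m : ℕ) (X : A), X ∈ E.leftPerp (E.idSet (W ∩ F) m) → X ∈ C := by
    intro m X hX
    rw [← hCperp]
    intro V hV
    exact hX V (hYmem_id m V hV)
  have hprojCW : ∀ P : A, E.ProjObj P → P ∈ C ∩ W := by
    intro P hP
    rw [← hCWperp]
    intro L _
    intro Eo f g hcfg
    exact hP ⟨_, _, hcfg⟩ (𝟙 P)
  have hΩ1 : ∀ Z : A, Z ∈ C ∩ W → Ωo Z ∈ C ∩ W := by
    intro Z hZ
    exact hHer1.1 (hConfl Z) (hprojCW _ (hProj Z)) hZ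
  have hΩCW : ∀ (Z : A), Z ∈ C ∩ W → ∀ i : ℕ, Ωo^[i] Z ∈ C ∩ W := by
    intro Z hZ i
    induction i with
    | zero => simpa using hZ
    | succ j ih =>
      rw [Function.iterate_succ_apply']
      exact hΩ1 _ ih
  -- Dimension shifting lemma (E): `Ext¹(Ωᵏ X, M') = 0` for `M'` of `F`-injective
  -- dimension at most `k` and `X ∈ C ∩ W`.
  have keyE : ∀ (k : ℕ) (M' : A), E.idLE F k M' →
      ∀ X ∈ C ∩ W, E.Ext1Zero (Ωo^[k] X) M' := by
    intro k
    induction k with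
    | zero =>
      intro M' hM' X hX
      obtain ⟨Cf, hCf, ⟨e⟩⟩ := hM'
      have hM'F : M' ∈ F := hFiso e.symm hCf
      simpa using hCWkills X hX M' hM'F
    | succ j ih =>
      intro M' hM' X hX
      obtain ⟨Cf, hCf, M₁, Y0f, f₀, g₀, hY0f, hcf₀, hcos⟩ := hM'
      have hM₁ : E.idLE F j M₁ := ⟨Cf, hCf, hcos⟩
      have hS' : Ωo^[j] X ∈ C ∩ W := hΩCW X hX j
      rw [Function.iterate_succ_apply']
      apply ext1Zero_of_cosyz hE hcf₀
      · exact hCWkills _ (hΩ1 _ hS') Y0f hY0f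
      · intro d
        exact surjOfProj hE (hConfl (Ωo^[j] X)) (hProj (Ωo^[j] X)) hcf₀
          (ih M₁ hM₁ X hX) d
  -- Lemma (COR): building a `(W ∩ F)`-coresolution.
  have keyCOR : ∀ (i : ℕ) (c : A), c ∈ C ∩ W →
      (∀ H ∈ C ∩ W, E.Ext1Zero (Ωo^[i] H) c) → E.idLE (W ∩ F) i c := by
    intro i
    induction i with
    | zero =>
      intro c hc hyp
      have hcF : c ∈ F := by
        rw [← hFperp]
        intro H hH
        simpa using hyp H hH
      exact ⟨c, ⟨hc.2, hcF⟩, ⟨Iso.refl c⟩⟩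
    | succ j ih =>
      intro c hc hyp
      obtain ⟨V, c', hf, hw, hVmem, hc'C, hconf⟩ := hCP2.2.2 c
      have hc'W : c' ∈ W := ((hThick.2 hconf).1) hc.2 (hVmem.1)
      have hc'CW : c' ∈ C ∩ W := ⟨hc'C, hc'W⟩
      have hyp' : ∀ H ∈ C ∩ W, E.Ext1Zero (Ωo^[j] H) c' := by
        intro H hH
        have hZ : Ωo^[j] H ∈ C ∩ W := hΩCW H hH j
        refine ext1Zero_core hE hconf (hConfl (Ωo^[j] H)) (hProj (Ωo^[j] H))
          (hCkills _ hZ.1 V hVmem) ?_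
        have := hyp H hH
        rwa [Function.iterate_succ_apply'] at this
      obtain ⟨Cfin, hCfin, hcos⟩ := ih c' hc'CW hyp'
      exact ⟨Cfin, hCfin, c', V, hf, hw, hVmem, hconf, hcos⟩
  -- (3) → (1), by induction on `n`.
  have three_to_one : ∀ (m : ℕ) (M' : A),
      (∀ H ∈ W ∩ E.leftPerp (E.idSet (W ∩ F) m), E.Ext1Zero H M') →
      M' ∈ E.idSet F m := by
    intro m
    induction m with
    | zero =>
      intro M' hyp3
      have hM'F : M' ∈ F := by
        rw [← hFperp]
        intro H hHCW
        refine hyp3 H ⟨hHCW.2, ?_⟩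
        intro V hV
        exact hCWkills H hHCW V (hid0 V hV).2
      exact mem_idSet_iff.2 ⟨0, le_refl 0, M', hM'F, ⟨Iso.refl M'⟩⟩
    | succ m' ih =>
      intro M' hyp3
      obtain ⟨F0, cw1, f₀, g₀, hF0, hcw1, hconf⟩ := hCP1.2.2 M'
      have claim : ∀ H' ∈ W ∩ E.leftPerp (E.idSet (W ∩ F) m'), E.Ext1Zero H' cw1 := by
        rintro H' ⟨hH'W, hH'X⟩
        have hH'CW : H' ∈ C ∩ W := ⟨hXC m' H' hH'X, hH'W⟩
        have hΩH'CW : Ωo H' ∈ C ∩ W := hΩ1 H' hH'CW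
        have hSUBV : ∀ k : ℕ, k ≤ m' + 1 → ∀ V : A, E.idLE (W ∩ F) k V →
            E.Ext1Zero (Ωo H') V := by
          intro k
          induction k with
          | zero =>
            intro _ V hV
            obtain ⟨Cf, hCf, ⟨e⟩⟩ := hV
            exact hCkills _ hΩH'CW.1 V (hYiso e.symm hCf)
          | succ j ihj =>
            intro hk V hV
            obtain ⟨Cfin, hCfin, V', Y0, hv, wv, hY0, hconfv, hcosj⟩ := hV
            apply ext1Zero_of_cosyz hE hconfv
            · exact hCkills _ hΩH'CW.1 Y0 hY0
            · intro t1
              have hV'm : V' ∈ E.idSet (W ∩ F) m' :=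
                mem_idSet_iff.2 ⟨j, Nat.lt_succ_iff.mp hk, Cfin, hCfin, hcosj⟩
              exact surjOfProj hE (hConfl H') (hProj H') hconfv (hH'X V' hV'm) t1
        have hΩX : Ωo H' ∈ E.leftPerp (E.idSet (W ∩ F) (m' + 1)) := by
          intro V hV
          obtain ⟨k, hk, hkle⟩ := mem_idSet_iff.1 hV
          exact hSUBV k hk V hkle
        have hExtM : E.Ext1Zero (Ωo H') M' := hyp3 (Ωo H') ⟨hΩH'CW.2, hΩX⟩
        exact ext1Zero_core hE hconf (hConfl H') (hProj H')
          (hCWkills H' hH'CW F0 hF0) hExtM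
      obtain ⟨k, hk, Cf, hCf, hcos⟩ := mem_idSet_iff.1 (ih cw1 claim)
      exact mem_idSet_iff.2 ⟨k + 1, Nat.succ_le_succ hk,
        Cf, hCf, cw1, F0, f₀, g₀, hF0, hconf, hcos⟩
  tfae_have 1 → 4
  · intro h1
    obtain ⟨k, hk, hkle⟩ := mem_idSet_iff.1 h1
    obtain ⟨F0, cw, ι0, p0, hF0, hcw, hconf0⟩ := hCP1.2.1 M
    refine ⟨F0, cw, ι0, p0, hconf0, ?_, hF0⟩
    refine mem_idSet_iff.2 ⟨n, le_refl n, keyCOR n cw hcw ?_⟩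
    intro H hHcw
    have hS : Ωo^[n] H ∈ C ∩ W := hΩCW H hHcw n
    refine ext1Zero_ext hE hconf0 (hCWkills _ hS F0 hF0) ?_
    have hEq : Ωo^[k] (Ωo^[n - k] H) = Ωo^[n] H := by
      rw [← Function.iterate_add_apply, Nat.add_sub_cancel' hk]
    have := keyE k M hkle (Ωo^[n - k] H) (hΩCW H hHcw (n - k))
    rwa [hEq] at this
  tfae_have 4 → 2
  · rintro ⟨N, L, ν, lam, hconf4, hLYn, hNF⟩
    obtain ⟨k, hkn, hkle⟩ := mem_idSet_iff.1 hLYn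
    -- The degenerate construction when `M ∈ F`.
    have hdeg : M ∈ F → ∃ (G C' : A) (f : M ⟶ G) (g : G ⟶ C'),
        E.IsConflation f g ∧ G ∈ F ∧ IsZero C' ∧
        (∀ X : A,
          (∀ h₁ h₂ : X ⟶ M, h₁ ≫ f = h₂ ≫ f → h₁ = h₂) ∧
          (∀ h : X ⟶ G, h ≫ g = 0 → ∃ h' : X ⟶ M, h' ≫ f = h) ∧
          (∀ h : X ⟶ C', ∃ h' : X ⟶ G, h' ≫ g = h)) := by
      intro hMF
      obtain ⟨Z, gz, hcz, hZ⟩ := zeroConfl hE M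
      refine ⟨M, Z, 𝟙 M, gz, hcz, hMF, hZ, ?_⟩
      intro X
      refine ⟨?_, ?_, ?_⟩
      · intro h₁ h₂ heq
        simpa using heq
      · intro h _
        exact ⟨h, Category.comp_id h⟩
      · intro h
        refine ⟨0, ?_⟩
        rw [zero_comp]
        exact hZ.eq_of_tgt 0 h
    -- If `L ∈ W ∩ F`, then `M ∈ F`.
    have hMF_of : E.idLE (W ∩ F) 0 L → M ∈ F := by
      intro h0
      obtain ⟨Cf, hCf, ⟨e⟩⟩ := h0
      have hLY : L ∈ W ∩ F := hYiso e.symm hCf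
      exact hHer1.2 hconf4 hNF hLY.2
    rcases n with _ | m
    · -- `n = 0`: necessarily `k = 0`.
      interval_cases k
      obtain ⟨G, C', f, g, hcfg, hGF, hZ, hexact⟩ := hdeg (hMF_of hkle)
      exact ⟨G, C', f, g, hcfg, hGF, hZ, fun X _ => hexact X⟩
    · rcases k with _ | j
      · obtain ⟨G, C', f, g, hcfg, hGF, hZ, hexact⟩ := hdeg (hMF_of hkle)
        refine ⟨G, C', f, g, hcfg, hGF, ?_, fun X _ => hexact X⟩
        refine hYmem_id m C' ?_
        rw [← hYperp]
        intro Cc _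
        exact zero_ext1Zero hE hZ Cc
      · -- main construction
        obtain ⟨Cfin, hCfin, L1, Y0, hmap, wmap, hY0, hconfh, hcosj⟩ := hkle
        obtain ⟨P, v, f', g', hcNv, hcf'g', hsq, hvg'⟩ := spliceConfl hE hconf4 hconfh
        have hPF : P ∈ F := hHer1.2 hcNv hNF hY0.2
        refine ⟨P, L1, f', g', hcf'g', hPF, ?_, ?_⟩
        · exact mem_idSet_iff.2 ⟨j, Nat.lt_succ_iff.mp hkn, Cfin, hCfin, hcosj⟩
        · intro X hX
          refine ⟨?_, ?_, ?_⟩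
          · intro h₁ h₂ heq
            haveI := conflMono hE hcf'g'
            exact (cancel_mono f').1 heq
          · intro h hh0
            exact conflLift hE hcf'g' h hh0
          · intro h
            obtain ⟨hh, hhh⟩ := liftAlongDeflation hE hconfh (hX L hLYn) h
            refine ⟨hh ≫ v, ?_⟩
            rw [Category.assoc, hvg', hhh]
  tfae_have 2 → 3
  · rintro ⟨G, C', f, g, hconf, hGF, _, hexact⟩
    rintro H ⟨hHW, hHX⟩
    have hHCW : H ∈ C ∩ W := ⟨hXC n H hHX, hHW⟩
    apply ext1Zero_of_cosyz hE hconf (hCWkills H hHCW G hGF)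
    exact (hexact H hHX).2.2
  tfae_have 3 → 1
  · intro h3
    exact three_to_one n M h3
  tfae_finish

end CotorsionPaper
end

section
/- Let A be a weakly idempotent complete exact category with enough projectives and injectives, and let (C, W, F) be a hereditary Hovey triple in A. Then W ∩ F_n = (W ∩ F)_n for every integer n ≥ 0. -/
open CategoryTheory CategoryTheory.Limits

universe w v u v₁ u₁ v₂ u₂ v₃ u₃

namespace CotorsionPaper

section Auxiliary

variable {A : Type u} [Category.{v} A] [Preadditive A] {E : ExactStruct A}

/-- The cokernel map of a conflation is an epimorphism. -/
lemma aux_epi (hE : E.IsExactCategory) {X Y Z : A} {f : X ⟶ Y} {g : Y ⟶ Z}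
    (h : E.IsConflation f g) : Epi g := by
  obtain ⟨hc⟩ := hE.isCokernel h
  refine ⟨fun {W} a b hab => ?_⟩
  exact Cofork.IsColimit.hom_ext hc (by simpa using hab)

/-- The kernel map of a conflation is a monomorphism. -/
lemma aux_mono (hE : E.IsExactCategory) {X Y Z : A} {f : X ⟶ Y} {g : Y ⟶ Z}
    (h : E.IsConflation f g) : Mono f := by
  obtain ⟨hc⟩ := hE.isKernel h
  refine ⟨fun {W} a b hab => ?_⟩
  exact Fork.IsLimit.hom_ext hc (by simpa using hab)

/-- Descend a morphism killing the kernel of a conflation along the cokernel. -/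
lemma aux_cokerDesc (hE : E.IsExactCategory) {X Y Z : A} {f : X ⟶ Y} {g : Y ⟶ Z}
    (h : E.IsConflation f g) {W : A} (k : Y ⟶ W) (hk : f ≫ k = 0) :
    ∃ d : Z ⟶ W, g ≫ d = k := by
  obtain ⟨hc⟩ := hE.isCokernel h
  obtain ⟨d, hd⟩ := CokernelCofork.IsColimit.desc' hc k hk
  exact ⟨d, by simpa using hd⟩

/-- Lift a morphism killed by the cokernel of a conflation through the kernel. -/
lemma aux_kerLift (hE : E.IsExactCategory) {X Y Z : A} {f : X ⟶ Y} {g : Y ⟶ Z}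
    (h : E.IsConflation f g) {W : A} (k : W ⟶ Y) (hk : k ≫ g = 0) :
    ∃ l : W ⟶ X, l ≫ f = k := by
  obtain ⟨hc⟩ := hE.isKernel h
  obtain ⟨l, hl⟩ := KernelFork.IsLimit.lift' hc k hk
  exact ⟨l, by simpa using hl⟩

/-- Transport of a conflation along a given pushout square of its inflation. -/
lemma aux_pushout_transport (hE : E.IsExactCategory) {M Eo Co N E' : A}
    {f : M ⟶ Eo} {π : Eo ⟶ Co} (hc : E.IsConflation f π)
    {u : M ⟶ N} {v : Eo ⟶ E'} {f' : N ⟶ E'} (sq : IsPushout f u v f') :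
    ∃ π' : E' ⟶ Co, E.IsConflation f' π' ∧ v ≫ π' = π := by
  obtain ⟨E₁, f₁, v₁, hinf₁, sq₁⟩ := hE.inflation_pushout u ⟨_, _, hc⟩
  obtain ⟨Z₁, g₁, hc₁⟩ := hinf₁
  haveI : Epi π := aux_epi hE hc
  haveI : Epi g₁ := aux_epi hE hc₁
  have w0 : f ≫ π = u ≫ (0 : N ⟶ Co) := by rw [hE.comp_zero hc, comp_zero]
  set π₁ : E₁ ⟶ Co := sq₁.desc π 0 w0 with hπ₁def
  have hv₁π₁ : v₁ ≫ π₁ = π := sq₁.inl_desc π 0 w0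
  have hf₁π₁ : f₁ ≫ π₁ = 0 := sq₁.inr_desc π 0 w0
  obtain ⟨t, ht⟩ := aux_cokerDesc hE hc₁ π₁ hf₁π₁
  obtain ⟨t', ht'⟩ := aux_cokerDesc hE hc (v₁ ≫ g₁) (by
    rw [← Category.assoc, sq₁.w, Category.assoc, hE.comp_zero hc₁, comp_zero])
  have h1 : π₁ ≫ t' = g₁ := by
    apply sq₁.hom_ext
    · rw [← Category.assoc, hv₁π₁, ht']
    · rw [← Category.assoc, hf₁π₁, zero_comp, hE.comp_zero hc₁]
  have htt' : t ≫ t' = 𝟙 Z₁ := by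
    rw [← cancel_epi g₁, ← Category.assoc, ht, h1, Category.comp_id]
  have ht't : t' ≫ t = 𝟙 Co := by
    rw [← cancel_epi π, ← Category.assoc, ht', Category.assoc, ht, hv₁π₁, Category.comp_id]
  have hcf₁π₁ : E.IsConflation f₁ π₁ :=
    hE.conflation_of_iso (Iso.refl N) (Iso.refl E₁) ⟨t, t', htt', ht't⟩ hc₁
      (by simp) (by simpa using ht.symm)
  -- compare the two pushouts
  set φ : E₁ ⟶ E' := sq₁.desc v f' sq.w with hφdef
  set ψ : E' ⟶ E₁ := sq.desc v₁ f₁ sq₁.w with hψdef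
  have hv₁φ : v₁ ≫ φ = v := sq₁.inl_desc v f' sq.w
  have hf₁φ : f₁ ≫ φ = f' := sq₁.inr_desc v f' sq.w
  have hvψ : v ≫ ψ = v₁ := sq.inl_desc v₁ f₁ sq₁.w
  have hf'ψ : f' ≫ ψ = f₁ := sq.inr_desc v₁ f₁ sq₁.w
  have hφψ : φ ≫ ψ = 𝟙 E₁ := by
    apply sq₁.hom_ext
    · rw [← Category.assoc, hv₁φ, hvψ, Category.comp_id]
    · rw [← Category.assoc, hf₁φ, hf'ψ, Category.comp_id]
  have hψφ : ψ ≫ φ = 𝟙 E' := by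
    apply sq.hom_ext
    · rw [← Category.assoc, hvψ, hv₁φ, Category.comp_id]
    · rw [← Category.assoc, hf'ψ, hf₁φ, Category.comp_id]
  refine ⟨ψ ≫ π₁, ?_, ?_⟩
  · refine hE.conflation_of_iso (Iso.refl N) ⟨φ, ψ, hφψ, hψφ⟩ (Iso.refl Co) hcf₁π₁ ?_ ?_
    · simpa using hf₁φ.symm
    · simp only [Iso.refl_hom, Category.comp_id]
      rw [← Category.assoc, hφψ, Category.id_comp]
  · rw [← Category.assoc, hvψ, hv₁π₁]

/-- Pushout of a conflation along an arbitrary morphism out of its kernel. -/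
lemma aux_pushout_confl (hE : E.IsExactCategory) {M Eo Co : A}
    {f : M ⟶ Eo} {π : Eo ⟶ Co} (hc : E.IsConflation f π) {N : A} (u : M ⟶ N) :
    ∃ (E' : A) (f' : N ⟶ E') (v : Eo ⟶ E') (π' : E' ⟶ Co),
      E.IsConflation f' π' ∧ IsPushout f u v f' ∧ v ≫ π' = π := by
  obtain ⟨E', f', v, _, sq⟩ := hE.inflation_pushout u ⟨_, _, hc⟩
  obtain ⟨π', h1, h2⟩ := aux_pushout_transport hE hc sq
  exact ⟨E', f', v, π', h1, sq, h2⟩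

/-- Pullback of a conflation along an arbitrary morphism into its cokernel. -/
lemma aux_pullback_confl (hE : E.IsExactCategory) {K Eo Co : A}
    {f : K ⟶ Eo} {π : Eo ⟶ Co} (hc : E.IsConflation f π) {Co' : A} (u : Co' ⟶ Co) :
    ∃ (E₃ : A) (f₂ : K ⟶ E₃) (v₂ : E₃ ⟶ Eo) (π₂ : E₃ ⟶ Co'),
      E.IsConflation f₂ π₂ ∧ π₂ ≫ u = v₂ ≫ π ∧ f₂ ≫ v₂ = f := by
  obtain ⟨E₃, π₂, v₂, hdef, sq⟩ := hE.deflation_pullback u ⟨_, _, hc⟩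
  obtain ⟨K₂, k₂, hc₂⟩ := hdef
  haveI : Mono f := aux_mono hE hc
  haveI : Mono k₂ := aux_mono hE hc₂
  have wf : (0 : K ⟶ Co') ≫ u = f ≫ π := by rw [zero_comp, hE.comp_zero hc]
  set f₂ : K ⟶ E₃ := sq.lift 0 f wf with hf₂def
  have hf₂π₂ : f₂ ≫ π₂ = 0 := sq.lift_fst 0 f wf
  have hf₂v₂ : f₂ ≫ v₂ = f := sq.lift_snd 0 f wf
  obtain ⟨α, hα⟩ := aux_kerLift hE hc₂ f₂ hf₂π₂
  obtain ⟨β, hβ⟩ := aux_kerLift hE hc (k₂ ≫ v₂) (by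
    rw [Category.assoc, ← sq.w, ← Category.assoc, hE.comp_zero hc₂, zero_comp])
  have hβf₂ : β ≫ f₂ = k₂ := by
    apply sq.hom_ext
    · rw [Category.assoc, hf₂π₂, comp_zero, hE.comp_zero hc₂]
    · rw [Category.assoc, hf₂v₂, hβ]
  have hαβ : α ≫ β = 𝟙 K := by
    rw [← cancel_mono f, Category.assoc, hβ, ← Category.assoc, hα, hf₂v₂, Category.id_comp]
  have hβα : β ≫ α = 𝟙 K₂ := by
    rw [← cancel_mono k₂, Category.assoc, hα, hβf₂, Category.id_comp]
  have hcf₂π₂ : E.IsConflation f₂ π₂ :=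
    hE.conflation_of_iso ⟨β, α, hβα, hαβ⟩ (Iso.refl E₃) (Iso.refl Co') hc₂
      (by simpa using hβf₂) (by simp)
  exact ⟨E₃, f₂, v₂, π₂, hcf₂π₂, sq.w, hf₂v₂⟩

/-- Noether-type lemma: for inflations `i : B ↣ P` (cokernel `p : P ↠ A₀`) and
`j : P ↣ Y₀` (cokernel `q : Y₀ ↠ X₀`) there is a conflation `A₀ ↣ Y₀/B ↠ X₀`. -/
lemma aux_noether (hE : E.IsExactCategory) {B P A₀ Y₀ X₀ : A}
    {i : B ⟶ P} {p : P ⟶ A₀} {j : P ⟶ Y₀} {q : Y₀ ⟶ X₀}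
    (h1 : E.IsConflation i p) (h2 : E.IsConflation j q) :
    ∃ (Q : A) (ρ : Y₀ ⟶ Q) (a : A₀ ⟶ Q) (b : Q ⟶ X₀),
      E.IsConflation (i ≫ j) ρ ∧ E.IsConflation a b ∧ p ≫ a = j ≫ ρ ∧ ρ ≫ b = q := by
  obtain ⟨Q, ρ, hρ⟩ : E.Inflation (i ≫ j) := hE.inflation_comp ⟨_, _, h1⟩ ⟨_, _, h2⟩
  obtain ⟨a, ha⟩ := aux_cokerDesc hE h1 (j ≫ ρ) (by
    rw [← Category.assoc]; exact hE.comp_zero hρ)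
  haveI : Epi p := aux_epi hE h1
  haveI : Epi ρ := aux_epi hE hρ
  have sq : IsPushout p j a ρ := by
    refine IsPushout.of_isColimit
      (PushoutCocone.IsColimit.mk ha (fun s => ?_) (fun s => ?_) (fun s => ?_)
        (fun s m hm1 hm2 => ?_))
    -- desc
    · exact (aux_cokerDesc hE hρ s.inr (by
        rw [Category.assoc, ← s.condition, ← Category.assoc, hE.comp_zero h1,
          zero_comp])).choose
    -- fac_left
    · have hd := (aux_cokerDesc hE hρ s.inr (by
        rw [Category.assoc, ← s.condition, ← Category.assoc, hE.comp_zero h1,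
          zero_comp])).choose_spec
      rw [← cancel_epi p, ← Category.assoc, ha, Category.assoc, hd, s.condition]
    -- fac_right
    · exact (aux_cokerDesc hE hρ s.inr (by
        rw [Category.assoc, ← s.condition, ← Category.assoc, hE.comp_zero h1,
          zero_comp])).choose_spec
    -- uniq
    · have hd := (aux_cokerDesc hE hρ s.inr (by
        rw [Category.assoc, ← s.condition, ← Category.assoc, hE.comp_zero h1,
          zero_comp])).choose_spec
      rw [← cancel_epi ρ, hm2, hd]
  obtain ⟨b, hcab, hb⟩ := aux_pushout_transport hE h2 sq.flip
  exact ⟨Q, ρ, a, b, hρ, hcab, ha, hb⟩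

/-- `Ext¹(Cq, −) = 0` is invariant under isomorphism. -/
lemma aux_ext1_iso (hE : E.IsExactCategory) {Cq M N : A} (e : M ≅ N)
    (h : E.Ext1Zero Cq N) : E.Ext1Zero Cq M := by
  intro Eo f g hc
  have hc' : E.IsConflation (e.inv ≫ f) g :=
    hE.conflation_of_iso e (Iso.refl Eo) (Iso.refl Cq) hc (by simp) (by simp)
  exact h hc'

/-- Objects with vanishing `Ext¹(Cq, −)` are closed under extensions. -/
lemma aux_ext_closed (hE : E.IsExactCategory) {Cq M₁ M M₂ : A} {i : M₁ ⟶ M} {p : M ⟶ M₂}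
    (hc : E.IsConflation i p) (h1 : E.Ext1Zero Cq M₁) (h2 : E.Ext1Zero Cq M₂) :
    E.Ext1Zero Cq M := by
  intro Eo f g hfg
  obtain ⟨Q, ρ, a, b, hijρ, hab, ha, hb⟩ := aux_noether hE hc hfg
  obtain ⟨σ, hσ⟩ := h2 hab
  obtain ⟨E₃, ft, vt, gt, hc₃, hsq, hfv⟩ := aux_pullback_confl hE hijρ σ
  obtain ⟨τ, hτ⟩ := h1 hc₃
  refine ⟨τ ≫ vt, ?_⟩
  have hvg : vt ≫ g = gt := by
    rw [← hb, ← Category.assoc, ← hsq, Category.assoc, hσ, Category.comp_id]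
  rw [Category.assoc, hvg, hτ]

end Auxiliary

section HoveyAux

variable {A : Type u} [Category.{v} A] [Preadditive A] {E : ExactStruct A}
variable {C W F : Set A}

lemma aux_mem_F_iff (hH : E.IsHereditaryHoveyTriple C W F) {P : A} :
    P ∈ F ↔ ∀ Cq ∈ C ∩ W, E.Ext1Zero Cq P := by
  conv_lhs => rw [← hH.1.1.1.1]
  exact Iff.rfl

lemma aux_F_iso (hE : E.IsExactCategory) (hH : E.IsHereditaryHoveyTriple C W F)
    {M N : A} (e : M ≅ N) (hN : N ∈ F) : M ∈ F := by
  rw [aux_mem_F_iff hH] at hN ⊢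
  exact fun Cq hCq => aux_ext1_iso hE e (hN Cq hCq)

lemma aux_F_ext (hE : E.IsExactCategory) (hH : E.IsHereditaryHoveyTriple C W F)
    {M₁ M M₂ : A} {i : M₁ ⟶ M} {p : M ⟶ M₂} (hc : E.IsConflation i p)
    (h1 : M₁ ∈ F) (h2 : M₂ ∈ F) : M ∈ F := by
  rw [aux_mem_F_iff hH] at h1 h2 ⊢
  exact fun Cq hCq => aux_ext_closed hE hc (h1 Cq hCq) (h2 Cq hCq)

/-- Dimension shifting, easy direction: in a conflation `T ↣ P ↠ Cc` with `T ∈ F`,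
the `F`-injective dimension of the cokernel is at most that of the middle term. -/
lemma aux_dsb (hE : E.IsExactCategory) (hH : E.IsHereditaryHoveyTriple C W F) :
    ∀ (n : ℕ) {T P Cc : A} {t : T ⟶ P} {p : P ⟶ Cc},
      E.IsConflation t p → T ∈ F → E.idLE F n P → E.idLE F n Cc := by
  intro n
  cases n with
  | zero =>
    intro T P Cc t p hc hT hP
    obtain ⟨Cend, hCend, ⟨e⟩⟩ := hP
    have hPF : P ∈ F := aux_F_iso hE hH e hCend
    exact ⟨Cc, hH.2.1.2 hc hT hPF, ⟨Iso.refl Cc⟩⟩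
  | succ n =>
    intro T P Cc t p hc hT hP
    obtain ⟨Cend, hCend, P₁, Y₀, f, g, hY, hfg, hcos⟩ := hP
    obtain ⟨Q, ρ, a, b, hmid, hab, -, -⟩ := aux_noether hE hc hfg
    exact ⟨Cend, hCend, P₁, Q, a, b, hH.2.1.2 hmid hT hY, hab, hcos⟩

/-- Dimension shifting, hard direction: in a conflation `T ↣ P ↠ Cc` with `T ∈ F`,
the `F`-injective dimension of the middle term is at most that of the cokernel. -/
lemma aux_dsa (hE : E.IsExactCategory) (hH : E.IsHereditaryHoveyTriple C W F) :
    ∀ (n : ℕ) {T P Cc : A} {t : T ⟶ P} {p : P ⟶ Cc},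
      E.IsConflation t p → T ∈ F → E.idLE F n Cc → E.idLE F n P := by
  intro n
  induction n with
  | zero =>
    intro T P Cc t p hc hT hCc
    obtain ⟨Cend, hCend, ⟨e⟩⟩ := hCc
    have hCcF : Cc ∈ F := aux_F_iso hE hH e hCend
    exact ⟨P, aux_F_ext hE hH hc hT hCcF, ⟨Iso.refl P⟩⟩
  | succ n ih =>
    intro T P Cc t p hc hT hCc
    obtain ⟨Cend, hCend, C₁, Y₀, cm, d, hY₀, hcd, hcos⟩ := hCc
    obtain ⟨YP, XP, e, w, hYP, hXP, hew⟩ := hH.1.1.2.2 P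
    obtain ⟨Q, ρ, a, b, hTYP, hab, ha, hb⟩ := aux_noether hE hc hew
    have hQ : Q ∈ F := hH.2.1.2 hTYP hT hYP
    obtain ⟨R, c', v, πR, hc'πR, sq, hvπR⟩ := aux_pushout_confl hE hcd a
    obtain ⟨b', hvb', hc'b'⟩ := aux_pushout_transport hE hab sq.flip
    have hR : E.idLE F n R := ih hc'πR hQ ⟨Cend, hCend, hcos⟩
    have hXPd : E.idLE F n XP := aux_dsb hE hH n hvb' hY₀ hR
    obtain ⟨Cend', hC', hcos'⟩ := hXPd
    exact ⟨Cend', hC', XP, YP, e, w, hYP, hew, hcos'⟩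

/-- Dimension shift between two cosyzygies along `F`-monomorphisms. -/
lemma aux_dshift (hE : E.IsExactCategory) (hH : E.IsHereditaryHoveyTriple C W F)
    (n : ℕ) {M A₁ A₁' B₁ B₁' : A} {fA : M ⟶ A₁} {gA : A₁ ⟶ A₁'} {fB : M ⟶ B₁}
    {gB : B₁ ⟶ B₁'} (hcA : E.IsConflation fA gA) (hcB : E.IsConflation fB gB)
    (hA : A₁ ∈ F) (hB : B₁ ∈ F) (h : E.idLE F n A₁') : E.idLE F n B₁' := by
  obtain ⟨P, f', v, gA', hcf', sq, hv⟩ := aux_pushout_confl hE hcA fB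
  obtain ⟨gB', hcv, hcb⟩ := aux_pushout_transport hE hcB sq.flip
  exact aux_dsb hE hH n hcv hA (aux_dsa hE hH n hcf' hB h)

/-- The key induction: an object of `W` of finite `F`-injective dimension has the same
`(W ∩ F)`-injective dimension. -/
lemma aux_mainL (hE : E.IsExactCategory) (hH : E.IsHereditaryHoveyTriple C W F) :
    ∀ (m : ℕ) (M : A), M ∈ W → E.idLE F m M → E.idLE (W ∩ F) m M := by
  intro m
  induction m with
  | zero =>
    intro M hMW hM
    obtain ⟨Cend, hC, ⟨e⟩⟩ := hM
    exact ⟨M, ⟨hMW, aux_F_iso hE hH e hC⟩, ⟨Iso.refl M⟩⟩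
  | succ m ih =>
    intro M hMW hM
    obtain ⟨Cend, hC, C₁, Y₀, f, g, hY₀, hfg, hcos⟩ := hM
    obtain ⟨TM, XM, f₂, g₂, hTM, hXM, hc₂⟩ := hH.1.2.1.2.2 M
    have hXMW : XM ∈ W := (hH.1.2.2.2 hc₂).1 hMW hTM.1
    have hXMd : E.idLE F m XM :=
      aux_dshift hE hH m hfg hc₂ hY₀ hTM.2 ⟨Cend, hC, hcos⟩
    obtain ⟨Cend', hC', hcos'⟩ := ih XM hXMW hXMd
    exact ⟨Cend', hC', XM, TM, f₂, g₂, hTM, hc₂, hcos'⟩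

lemma aux_cosyz_mono {Y Y' : Set A} (hsub : Y ⊆ Y') :
    ∀ (n : ℕ) {Cd M : A}, CosyzOf E Y n Cd M → CosyzOf E Y' n Cd M := by
  intro n
  induction n with
  | zero => intro _ _ h; exact h
  | succ n ih =>
    intro Cd M h
    obtain ⟨C', Y₀, f, g, hY₀, hc, hcos⟩ := h
    exact ⟨C', Y₀, f, g, hsub hY₀, hc, ih hcos⟩

lemma aux_w_of_cosyz (hH : E.IsHereditaryHoveyTriple C W F) :
    ∀ (n : ℕ) {Cd M : A}, Cd ∈ W → CosyzOf E (W ∩ F) n Cd M → M ∈ W := by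
  intro n
  induction n with
  | zero =>
    intro Cd M hCd h
    obtain ⟨e⟩ := h
    exact hH.1.2.2.1 e.hom e.inv e.hom_inv_id hCd
  | succ n ih =>
    intro Cd M hCd h
    obtain ⟨C', Y₀, f, g, hY₀, hc, hcos⟩ := h
    exact (hH.1.2.2.2 hc).2.2 hY₀.1 (ih hCd hcos)

lemma aux_idim_le_iff {Y : Set A} {M : A} {n : ℕ} :
    E.idim Y M ≤ (n : ℕ∞) ↔ ∃ m : ℕ, m ≤ n ∧ E.idLE Y m M := by
  constructor
  · intro h
    by_contra hcon
    push_neg at hcon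
    have hge : ((n : ℕ∞) + 1) ≤ E.idim Y M := by
      apply le_sInf
      rintro x ⟨m, hm, rfl⟩
      have hmn : ¬ m ≤ n := fun hle => hcon m hle hm
      have : n + 1 ≤ m := Nat.succ_le_of_lt (Nat.lt_of_not_le hmn)
      show ((n : ℕ∞) + 1) ≤ (m : ℕ∞)
      exact_mod_cast this
    have : ((n : ℕ∞) + 1) ≤ (n : ℕ∞) := le_trans hge h
    have hfalse : ¬ ((n : ℕ∞) + 1 ≤ (n : ℕ∞)) := by
      exact_mod_cast Nat.not_succ_le_self n
    exact hfalse this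
  · rintro ⟨m, hmn, hm⟩
    refine le_trans (sInf_le ⟨m, hm, rfl⟩) ?_
    show (m : ℕ∞) ≤ (n : ℕ∞)
    exact_mod_cast hmn

end HoveyAux

/-- For a hereditary Hovey triple `(C, W, F)` in a WIC exact category
with enough projectives and injectives, `W ∩ F_n = (W ∩ F)_n` for all `n ≥ 0`. -/
theorem statement7 {A : Type u} [Category.{v} A] [Preadditive A]
    (E : ExactStruct A) (hE : E.IsExactCategory) (hwic : WIC A)
    (hproj : E.EnoughProjectives) (hinj : E.EnoughInjectives)
    (C W F : Set A)
    (hH : E.IsHereditaryHoveyTriple C W F) :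
    ∀ n : ℕ, W ∩ E.idSet F n = E.idSet (W ∩ F) n := by
  intro n
  ext M
  constructor
  · rintro ⟨hMW, hMd⟩
    obtain ⟨m, hmn, hm⟩ := aux_idim_le_iff.mp hMd
    exact aux_idim_le_iff.mpr ⟨m, hmn, aux_mainL hE hH m M hMW hm⟩
  · intro h
    obtain ⟨m, hmn, Cend, hC, hcos⟩ := aux_idim_le_iff.mp h
    refine ⟨aux_w_of_cosyz hH m hC.1 hcos, ?_⟩
    exact aux_idim_le_iff.mpr
      ⟨m, hmn, Cend, hC.2, aux_cosyz_mono Set.inter_subset_right m hcos⟩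

end CotorsionPaper
end
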